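/- arXiv:1903.11346 — 7 statements merged into one kernel-verified Lean document; each statement's English description precedes it below -/
import Mathlib

section
/- Let I and J be disjoint nonempty open intervals of ℝ and let g ∈ L²(ℝ). If for almost every x ∈ I one has ∫_J g(t)/(x−t) dt = 0, then g = 0 almost everywhere on J. -/
open MeasureTheory

/-- Poisson kernel of the upper half-plane at height `y`. -/
noncomputable def Pker (y x : ℝ) : ℝ := (1 / Real.pi) * y / (x ^ 2 + y ^ 2)

/-- Conjugate Poisson kernel at height `y`. -/
noncomputable def Qker (y x : ℝ) : ℝ := (1 / Real.pi) * x / (x ^ 2 + y ^ 2)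

/-- Partial derivative in `x` of the Poisson kernel. -/
noncomputable def dPdx (y x : ℝ) : ℝ := -(1 / Real.pi) * (2 * x * y) / (x ^ 2 + y ^ 2) ^ 2

/-- Partial derivative in `y` of the Poisson kernel. -/
noncomputable def dPdy (y x : ℝ) : ℝ := (1 / Real.pi) * (x ^ 2 - y ^ 2) / (x ^ 2 + y ^ 2) ^ 2

/-- Partial derivative in `x` of the conjugate Poisson kernel. -/
noncomputable def dQdx (y x : ℝ) : ℝ := (1 / Real.pi) * (y ^ 2 - x ^ 2) / (x ^ 2 + y ^ 2) ^ 2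

/-- Convolution on `ℝ`: `(k ⋆ g) x = ∫ k (x - t) * g t dt`. -/
noncomputable def conv (k g : ℝ → ℝ) (x : ℝ) : ℝ := ∫ t, k (x - t) * g t

/-- Iterated Cauchy transform of `g` over `(c,d)`. -/
noncomputable def CTrans (g : ℝ → ℝ) (c d : ℝ) (n : ℕ) (x : ℝ) : ℝ :=
  ∫ t in Set.Ioo c d, g t * ((x - t) ^ (n + 1))⁻¹

/-- A continuous function vanishing a.e. on an open set vanishes everywhere on it. -/
lemma zero_of_ae_zero_of_continuousAt {I : Set ℝ} (hI : IsOpen I) {F : ℝ → ℝ}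
    (hcont : ∀ x ∈ I, ContinuousAt F x)
    (hae : ∀ᵐ x ∂(volume.restrict I), F x = 0) :
    ∀ x ∈ I, F x = 0 := by
  intro x hx
  by_contra hne
  have h1 : ∀ᶠ y in nhds x, F y ≠ 0 := (hcont x hx).eventually_ne hne
  have h2 : ∀ᶠ y in nhds x, y ∈ I := hI.mem_nhds hx
  obtain ⟨r, hr, hball⟩ := Metric.eventually_nhds_iff_ball.1 (h1.and h2)
  have hnull : volume.restrict I {y | ¬ F y = 0} = 0 := ae_iff.1 hae
  have hball' : Metric.ball x r ⊆ I := fun y hy => (hball y hy).2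
  have hmono : (volume.restrict I) (Metric.ball x r) ≤ 0 := by
    rw [← hnull]
    exact measure_mono (fun y hy => (hball y hy).1)
  have h3 : (volume.restrict I) (Metric.ball x r) = volume (Metric.ball x r) := by
    rw [Measure.restrict_apply Metric.isOpen_ball.measurableSet,
      Set.inter_eq_left.2 hball']
  have h4 : 0 < volume (Metric.ball x r) :=
    Metric.isOpen_ball.measure_pos volume (Metric.nonempty_ball.2 hr)
  rw [h3] at hmono
  exact absurd (le_antisymm hmono h4.le).symm h4.ne

lemma key_lemma (a b c d : ℝ) (hab : a < b) (hcd : c < d)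
    (g : ℝ → ℝ) (hgm : AEStronglyMeasurable g volume)
    (hgi : IntegrableOn g (Set.Ioo c d))
    (hsep : ∀ x ∈ Set.Ioo a b, ∃ δ > 0, ∀ y ∈ Metric.ball x δ, ∀ t ∈ Set.Icc c d, δ ≤ |y - t|)
    (hz : ∀ᵐ x ∂(volume.restrict (Set.Ioo a b)), (∫ t in Set.Ioo c d, g t / (x - t)) = 0) :
    ∀ᵐ t ∂(volume.restrict (Set.Ioo c d)), g t = 0 := by
  set J : Set ℝ := Set.Ioo c d with hJ
  -- measurability of kernels
  have hker_meas : ∀ (x : ℝ) (k : ℕ),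
      AEStronglyMeasurable (fun t => ((x - t) ^ k)⁻¹) (volume.restrict J) :=
    fun x k => (((measurable_const.sub measurable_id).pow_const k).inv).aestronglyMeasurable
  -- integrability of integrands
  have hFint : ∀ x ∈ Set.Ioo a b, ∀ k : ℕ,
      IntegrableOn (fun t => g t * ((x - t) ^ (k + 1))⁻¹) J := by
    intro x hx k
    obtain ⟨δ, hδ, hs⟩ := hsep x hx
    have hb : ∀ᵐ t ∂(volume.restrict J), ‖((x - t) ^ (k + 1))⁻¹‖ ≤ (δ ^ (k + 1))⁻¹ := by
      filter_upwards [ae_restrict_mem measurableSet_Ioo] with t ht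
      have h1 : δ ≤ |x - t| := hs x (Metric.mem_ball_self hδ) t (Set.Ioo_subset_Icc_self ht)
      rw [norm_inv, norm_pow, Real.norm_eq_abs]
      gcongr
    have := (Integrable.bdd_mul (c := (δ ^ (k + 1))⁻¹) hgi (hker_meas x (k + 1)) hb)
    simpa [mul_comm, IntegrableOn] using this
  -- derivative formula
  have hderiv : ∀ (n : ℕ), ∀ x ∈ Set.Ioo a b,
      HasDerivAt (CTrans g c d n) (-(n + 1 : ℝ) * CTrans g c d (n + 1) x) x := by
    intro n x hx
    obtain ⟨δ, hδ, hs⟩ := hsep x hx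
    have key := hasDerivAt_integral_of_dominated_loc_of_deriv_le
      (μ := volume.restrict J)
      (F := fun y t => g t * ((y - t) ^ (n + 1))⁻¹)
      (F' := fun y t => g t * (-(n + 1 : ℝ) * ((y - t) ^ (n + 2))⁻¹))
      (x₀ := x) (s := Metric.ball x δ)
      (bound := fun t => |g t| * ((n + 1 : ℝ) * (δ ^ (n + 2))⁻¹)) (Metric.ball_mem_nhds x hδ)
      (Filter.Eventually.of_forall fun y =>
        (hgm.restrict).mul (hker_meas y (n + 1)))
      (hFint x hx n)
      ((hgm.restrict).mul ((hker_meas x (n + 2)).const_mul _))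
      ?_ ((hgi.norm).mul_const _) ?_
    · have h2 := key.2
      have h3 : (∫ t in J, g t * (-(n + 1 : ℝ) * ((x - t) ^ (n + 2))⁻¹))
          = -(n + 1 : ℝ) * CTrans g c d (n + 1) x := by
        rw [CTrans, ← integral_const_mul]
        exact setIntegral_congr_fun measurableSet_Ioo (fun t _ => by ring)
      rw [h3] at h2
      exact h2
    · filter_upwards [ae_restrict_mem measurableSet_Ioo] with t ht y hy
      have h1 : δ ≤ |y - t| := hs y hy t (Set.Ioo_subset_Icc_self ht)
      rw [norm_mul, norm_mul, norm_neg, norm_inv, norm_pow, Real.norm_eq_abs,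
        Real.norm_eq_abs]
      have hcast : |(n + 1 : ℝ)| = (n + 1 : ℝ) := abs_of_nonneg (by positivity)
      rw [hcast]
      gcongr
      rwa [Real.norm_eq_abs]
    · filter_upwards [ae_restrict_mem measurableSet_Ioo] with t ht y hy
      have h1 : δ ≤ |y - t| := hs y hy t (Set.Ioo_subset_Icc_self ht)
      have hyt : y - t ≠ 0 := by
        intro h
        rw [h, abs_zero] at h1
        linarith
      have h2 : HasDerivAt (fun y => (y - t) ^ (n + 1))
          ((n + 1 : ℝ) * (y - t) ^ n) y := by
        have := (hasDerivAt_pow (n + 1) (y - t)).comp y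
          ((hasDerivAt_id y).sub_const t)
        simpa [Function.comp_def] using this
      have h3 := h2.inv (pow_ne_zero _ hyt)
      have h4 := h3.const_mul (g t)
      convert h4 using 1
      · rfl
      · rfl
      · field_simp
        ring
  -- CTrans 0 vanishes a.e. hence everywhere on I
  have hF0 : ∀ x ∈ Set.Ioo a b, CTrans g c d 0 x = 0 := by
    apply zero_of_ae_zero_of_continuousAt isOpen_Ioo
      (fun x hx => (hderiv 0 x hx).continuousAt)
    filter_upwards [hz] with x hx
    rw [CTrans, ← hx]
    exact setIntegral_congr_fun measurableSet_Ioo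
      (fun t _ => by rw [pow_one, div_eq_mul_inv])
  -- all CTrans vanish on I
  have hFn : ∀ n : ℕ, ∀ x ∈ Set.Ioo a b, CTrans g c d n x = 0 := by
    intro n
    induction n with
    | zero => exact hF0
    | succ n ih =>
      intro x hx
      have h1 : HasDerivAt (CTrans g c d n) (-(n + 1 : ℝ) * CTrans g c d (n + 1) x) x :=
        hderiv n x hx
      have h2 : CTrans g c d n =ᶠ[nhds x] (fun _ => (0 : ℝ)) := by
        filter_upwards [isOpen_Ioo.mem_nhds hx] with y hy using ih y hy
      have h3 : HasDerivAt (fun _ : ℝ => (0 : ℝ)) (-(n + 1 : ℝ) * CTrans g c d (n + 1) x) x :=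
        h1.congr_of_eventuallyEq h2.symm
      have h4 := h3.unique (hasDerivAt_const x 0)
      have h5 : (-(n + 1 : ℝ)) ≠ 0 := by
        intro h
        have : (n + 1 : ℝ) > 0 := by positivity
        linarith [neg_eq_zero.1 h]
      rcases mul_eq_zero.1 h4 with h | h
      · exact absurd h h5
      · exact h
  -- fix a point x₀ in I
  set x₀ : ℝ := (a + b) / 2 with hx₀def
  have hx₀ : x₀ ∈ Set.Ioo a b := ⟨by simp only [hx₀def]; linarith, by simp only [hx₀def]; linarith⟩
  obtain ⟨δ₀, hδ₀, hs₀⟩ := hsep x₀ hx₀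
  have hsIcc : ∀ t ∈ Set.Icc c d, δ₀ ≤ |x₀ - t| :=
    fun t ht => hs₀ x₀ (Metric.mem_ball_self hδ₀) t ht
  have hne : ∀ t ∈ Set.Icc c d, x₀ - t ≠ 0 := by
    intro t ht h
    have := hsIcc t ht
    rw [h, abs_zero] at this
    linarith
  set f : ℝ → ℝ := fun t => (x₀ - t)⁻¹ with hfdef
  -- moments vanish
  have hmom : ∀ k : ℕ, (∫ t in J, g t * (f t) ^ (k + 1)) = 0 := by
    intro k
    have h1 := hFn k x₀ hx₀
    rw [CTrans] at h1
    rw [← h1]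
    exact setIntegral_congr_fun measurableSet_Ioo (fun t _ => by
      rw [hfdef, inv_pow])
  -- f bounded on J
  have hfb : ∀ t ∈ Set.Icc c d, ‖f t‖ ≤ δ₀⁻¹ := by
    intro t ht
    rw [hfdef, norm_inv, Real.norm_eq_abs]
    exact inv_anti₀ hδ₀ (hsIcc t ht)
  -- integrability of polynomial integrands
  have hcontf : ContinuousOn f (Set.Icc c d) :=
    (continuous_const.sub continuous_id).continuousOn.inv₀ hne
  have hP_int : ∀ q : Polynomial ℝ,
      IntegrableOn (fun t => g t * (f t * Polynomial.eval (f t) q)) J := by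
    intro q
    have hc : ContinuousOn (fun t => f t * Polynomial.eval (f t) q) (Set.Icc c d) :=
      hcontf.mul ((Polynomial.continuous q).comp_continuousOn hcontf)
    obtain ⟨C, hC⟩ := isCompact_Icc.exists_bound_of_continuousOn hc
    have hmeas : AEStronglyMeasurable (fun t => f t * Polynomial.eval (f t) q)
        (volume.restrict J) := by
      have : Measurable f := (measurable_const.sub measurable_id).inv
      exact (this.mul ((Polynomial.continuous q).measurable.comp this)).aestronglyMeasurable
    have hb : ∀ᵐ t ∂(volume.restrict J), ‖f t * Polynomial.eval (f t) q‖ ≤ C := by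
      filter_upwards [ae_restrict_mem measurableSet_Ioo] with t ht
      exact hC t (Set.Ioo_subset_Icc_self ht)
    have := Integrable.bdd_mul (c := C) hgi hmeas hb
    simpa [mul_comm, IntegrableOn] using this
  -- integrals against polynomials in f (with zero constant term) vanish
  have hpoly : ∀ q : Polynomial ℝ,
      (∫ t in J, g t * (f t * Polynomial.eval (f t) q)) = 0 := by
    intro q
    induction q using Polynomial.induction_on with
    | C r =>
      have h1 : (∫ t in J, g t * (f t * Polynomial.eval (f t) (Polynomial.C r)))
          = r * ∫ t in J, g t * (f t) ^ (0 + 1) := by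
        rw [← integral_const_mul]
        exact setIntegral_congr_fun measurableSet_Ioo (fun t _ => by
          simp only [Polynomial.eval_C, pow_one]
          ring)
      rw [h1, hmom 0, mul_zero]
    | add p q hp hq =>
      have h1 : (∫ t in J, g t * (f t * Polynomial.eval (f t) (p + q)))
          = (∫ t in J, (g t * (f t * Polynomial.eval (f t) p)
            + g t * (f t * Polynomial.eval (f t) q))) :=
        setIntegral_congr_fun measurableSet_Ioo (fun t _ => by
          rw [Polynomial.eval_add]; ring)
      rw [h1, integral_add (hP_int p) (hP_int q), hp, hq, add_zero]
    | monomial k r _ =>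
      have h1 : (∫ t in J, g t * (f t * Polynomial.eval (f t)
            (Polynomial.C r * Polynomial.X ^ (k + 1))))
          = r * ∫ t in J, g t * (f t) ^ (k + 1 + 1) := by
        rw [← integral_const_mul]
        exact setIntegral_congr_fun measurableSet_Ioo (fun t _ => by
          simp only [Polynomial.eval_mul, Polynomial.eval_C, Polynomial.eval_pow,
            Polynomial.eval_X]
          ring)
      rw [h1, hmom (k + 1), mul_zero]
  -- Stone–Weierstrass on Icc c d
  set fc : C((Set.Icc c d : Set ℝ), ℝ) :=
    ⟨fun t => (x₀ - (t : ℝ))⁻¹,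
      (continuous_const.sub continuous_subtype_val).inv₀ (fun t => hne t t.2)⟩ with hfc
  set A : Subalgebra ℝ C((Set.Icc c d : Set ℝ), ℝ) := Algebra.adjoin ℝ {fc} with hA
  have hsepA : A.SeparatesPoints := by
    intro t1 t2 h12
    refine ⟨fc, ⟨fc, Algebra.subset_adjoin rfl, rfl⟩, ?_⟩
    intro h
    apply h12
    have h1 : x₀ - (t1 : ℝ) = x₀ - (t2 : ℝ) := inv_inj.1 h
    exact Subtype.ext (by linarith)
  have htop : A.topologicalClosure = ⊤ :=
    ContinuousMap.subalgebra_topologicalClosure_eq_top_of_separatesPoints A hsepA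
  have happrox : ∀ (ψ : C((Set.Icc c d : Set ℝ), ℝ)) (ε : ℝ), 0 < ε →
      ∃ q : Polynomial ℝ, ∀ t : (Set.Icc c d : Set ℝ),
        |ψ t - Polynomial.eval (fc t) q| ≤ ε := by
    intro ψ ε hε
    have h1 : ψ ∈ closure (A : Set C((Set.Icc c d : Set ℝ), ℝ)) := by
      have h0 : ψ ∈ A.topologicalClosure := by rw [htop]; trivial
      exact h0
    obtain ⟨p, hpA, hdist⟩ := Metric.mem_closure_iff.1 h1 ε hε
    rw [hA, Algebra.adjoin_singleton_eq_range_aeval] at hpA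
    obtain ⟨q, hq⟩ := hpA
    refine ⟨q, fun t => ?_⟩
    have h2 : dist (ψ t) (p t) ≤ dist ψ p := ContinuousMap.dist_apply_le_dist t
    have h3 : p t = Polynomial.eval (fc t) q := by
      rw [← hq]; exact Polynomial.aeval_continuousMap_apply q fc t
    rw [← h3]
    calc |ψ t - p t| = dist (ψ t) (p t) := (Real.dist_eq _ _).symm
    _ ≤ dist ψ p := h2
    _ ≤ ε := hdist.le
  -- integrals against continuous functions vanish
  have htest : ∀ φ : ℝ → ℝ, Continuous φ → (∫ t in J, g t * φ t) = 0 := by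
    intro φ hφ
    set ψ : C((Set.Icc c d : Set ℝ), ℝ) :=
      ⟨fun t => φ t * (x₀ - (t : ℝ)),
        (hφ.comp continuous_subtype_val).mul
          (continuous_const.sub continuous_subtype_val)⟩ with hψ
    set C : ℝ := δ₀⁻¹ * ∫ t in J, |g t| with hC
    have hC0 : 0 ≤ C :=
      mul_nonneg (inv_nonneg.2 hδ₀.le) (integral_nonneg fun t => abs_nonneg _)
    have hbnd : ∀ ε : ℝ, 0 < ε → |∫ t in J, g t * φ t| ≤ C * ε := by
      intro ε hε
      obtain ⟨q, hq⟩ := happrox ψ ε hε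
      have hφint : IntegrableOn (fun t => g t * φ t) J := by
        obtain ⟨Cφ, hCφ⟩ := isCompact_Icc.exists_bound_of_continuousOn
          (hφ.continuousOn (s := Set.Icc c d))
        have hb : ∀ᵐ t ∂(volume.restrict J), ‖φ t‖ ≤ Cφ := by
          filter_upwards [ae_restrict_mem measurableSet_Ioo] with t ht
          exact hCφ t (Set.Ioo_subset_Icc_self ht)
        have := Integrable.bdd_mul (c := Cφ) hgi hφ.aestronglyMeasurable.restrict hb
        simpa [mul_comm, IntegrableOn] using this
      have hsub : (∫ t in J, (g t * φ t - g t * (f t * Polynomial.eval (f t) q)))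
          = (∫ t in J, g t * φ t) - ∫ t in J, g t * (f t * Polynomial.eval (f t) q) :=
        integral_sub hφint (hP_int q)
      rw [hpoly q, sub_zero] at hsub
      rw [← hsub]
      have hb2 : ∀ t ∈ J, ‖g t * φ t - g t * (f t * Polynomial.eval (f t) q)‖
          ≤ |g t| * (δ₀⁻¹ * ε) := by
        intro t ht
        have htI : t ∈ Set.Icc c d := Set.Ioo_subset_Icc_self ht
        have hne' : x₀ - t ≠ 0 := hne t htI
        have hid : f t * (ψ ⟨t, htI⟩) = φ t := by
          show (x₀ - t)⁻¹ * (φ t * (x₀ - t)) = φ t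
          field_simp
        have heq : g t * φ t - g t * (f t * Polynomial.eval (f t) q)
            = g t * (f t * (ψ ⟨t, htI⟩ - Polynomial.eval (f t) q)) := by
          rw [← hid]; ring
        rw [heq, norm_mul, norm_mul, Real.norm_eq_abs, Real.norm_eq_abs,
          Real.norm_eq_abs]
        have h1 : |f t| ≤ δ₀⁻¹ := by
          have := hfb t htI
          rwa [Real.norm_eq_abs] at this
        have h2 : |ψ ⟨t, htI⟩ - Polynomial.eval (f t) q| ≤ ε := by
          have := hq ⟨t, htI⟩
          exact this
        exact mul_le_mul_of_nonneg_left
          (mul_le_mul h1 h2 (abs_nonneg _) (inv_nonneg.2 hδ₀.le)) (abs_nonneg _)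
      have h3 : ‖∫ t in J, (g t * φ t - g t * (f t * Polynomial.eval (f t) q))‖
          ≤ ∫ t in J, |g t| * (δ₀⁻¹ * ε) := by
        apply norm_integral_le_of_norm_le (hgi.norm.mul_const _)
        filter_upwards [ae_restrict_mem measurableSet_Ioo] with t ht
        exact hb2 t ht
      rw [Real.norm_eq_abs] at h3
      calc |∫ t in J, (g t * φ t - g t * (f t * Polynomial.eval (f t) q))|
          ≤ ∫ t in J, |g t| * (δ₀⁻¹ * ε) := h3
        _ = C * ε := by rw [integral_mul_const, hC]; ring
    by_contra hv
    have h2 : 0 < |∫ t in J, g t * φ t| := abs_pos.2 hv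
    have h1 := hbnd (|∫ t in J, g t * φ t| / (2 * (C + 1))) (by positivity)
    have h4 : C / (2 * (C + 1)) < 1 := by
      rw [div_lt_one (by positivity)]
      linarith
    have h5 : C * (|∫ t in J, g t * φ t| / (2 * (C + 1)))
        = (C / (2 * (C + 1))) * |∫ t in J, g t * φ t| := by ring
    rw [h5] at h1
    nlinarith
  -- conclude via test against smooth functions
  have hind : ∀ᵐ x ∂(volume : Measure ℝ), Set.indicator J g x = 0 := by
    apply ae_eq_zero_of_integral_contDiff_smul_eq_zero
      ((hgi.integrable_indicator measurableSet_Ioo).locallyIntegrable)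
    intro φ hφ hsupp
    have h1 : (fun x => φ x • Set.indicator J g x)
        = Set.indicator J (fun x => g x * φ x) := by
      funext x
      by_cases hx : x ∈ J
      · simp [Set.indicator_of_mem hx, smul_eq_mul, mul_comm]
      · simp [Set.indicator_of_notMem hx]
    rw [h1, integral_indicator measurableSet_Ioo]
    exact htest φ hφ.continuous
  have hR : ∀ᵐ t ∂(volume.restrict J), Set.indicator J g t = 0 := ae_restrict_of_ae hind
  filter_upwards [hR, ae_restrict_mem measurableSet_Ioo] with t h1 ht
  rwa [Set.indicator_of_mem ht] at h1

/-- If `I = (a,b)` and `J = (c,d)` are disjoint nonempty open intervals, `g ∈ L²(ℝ)`, and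
`∫_J g(t)/(x−t) dt = 0` for a.e. `x ∈ I`, then `g = 0` a.e. on `J`. -/
theorem stmt5 (a b c d : ℝ) (hab : a < b) (hcd : c < d)
    (hdisj : Disjoint (Set.Ioo a b) (Set.Ioo c d))
    (g : ℝ → ℝ) (hg : MemLp g 2 volume)
    (hz : ∀ᵐ x ∂(volume.restrict (Set.Ioo a b)), (∫ t in Set.Ioo c d, g t / (x - t)) = 0) :
    ∀ᵐ t ∂(volume.restrict (Set.Ioo c d)), g t = 0 := by
  -- the intervals are separated: either b ≤ c or d ≤ a
  have hside : b ≤ c ∨ d ≤ a := by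
    by_contra hcon
    push_neg at hcon
    obtain ⟨h1, h2⟩ := hcon
    set m : ℝ := (max a c + min b d) / 2 with hm
    have hLR : max a c < min b d := max_lt (lt_min hab h2) (lt_min h1 hcd)
    have hm1 : max a c < m := by rw [hm]; linarith
    have hm2 : m < min b d := by rw [hm]; linarith
    have hmI : m ∈ Set.Ioo a b :=
      ⟨lt_of_le_of_lt (le_max_left a c) hm1, lt_of_lt_of_le hm2 (min_le_left b d)⟩
    have hmJ : m ∈ Set.Ioo c d :=
      ⟨lt_of_le_of_lt (le_max_right a c) hm1, lt_of_lt_of_le hm2 (min_le_right b d)⟩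
    exact Set.disjoint_left.1 hdisj hmI hmJ
  -- integrability of g on (c,d)
  haveI hfin : IsFiniteMeasure (volume.restrict (Set.Ioo c d)) := by
    constructor
    rw [Measure.restrict_apply_univ, Real.volume_Ioo]
    exact ENNReal.ofReal_lt_top
  have hgi : IntegrableOn g (Set.Ioo c d) :=
    (hg.restrict (Set.Ioo c d)).integrable one_le_two
  -- separation property
  have hsep : ∀ x ∈ Set.Ioo a b, ∃ δ > 0,
      ∀ y ∈ Metric.ball x δ, ∀ t ∈ Set.Icc c d, δ ≤ |y - t| := by
    intro x hx
    rcases hside with h | h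
    · refine ⟨(c - x) / 2, by linarith [hx.2], ?_⟩
      intro y hy t ht
      rw [Metric.mem_ball, Real.dist_eq] at hy
      have h1 : y - x < (c - x) / 2 := lt_of_le_of_lt (le_abs_self _) hy
      have h2 : c ≤ t := ht.1
      have h3 : (c - x) / 2 ≤ t - y := by linarith [hx.2]
      calc (c - x) / 2 ≤ t - y := h3
        _ ≤ |t - y| := le_abs_self _
        _ = |y - t| := abs_sub_comm t y
    · refine ⟨(x - d) / 2, by linarith [hx.1], ?_⟩
      intro y hy t ht
      rw [Metric.mem_ball, Real.dist_eq] at hy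
      have h1 : x - y < (x - d) / 2 := lt_of_le_of_lt (le_abs_self _) (by rwa [abs_sub_comm])
      have h2 : t ≤ d := ht.2
      have h3 : (x - d) / 2 ≤ y - t := by linarith [hx.1]
      calc (x - d) / 2 ≤ y - t := h3
        _ ≤ |y - t| := le_abs_self _
  exact key_lemma a b c d hab hcd g hg.1 hgi hsep hz
end

section
/- Let a < b be real numbers. For every x ∈ (a,b), the principal value of the integral of 1/(√((t−a)(b−t))·(x−t)) over (a,b) vanishes; that is, lim_{ε→0⁺} ∫_{{t ∈ (a,b) : |t−x| > ε}} 1/(√((t−a)(b−t))·(x−t)) dt = 0. In other words, the function t ↦ 1/√((t−a)(b−t)) on (a,b) is annihilated on (a,b) by the truncated Hilbert transform. -/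
open MeasureTheory

namespace Stmt6Aux

/-- The Chebyshev-type weight. -/
noncomputable def w (a b t : ℝ) : ℝ := Real.sqrt ((t - a) * (b - t))

/-- Weight at the point x. -/
noncomputable def WW (a b x : ℝ) : ℝ := Real.sqrt ((x - a) * (b - x))

/-- The "nice" factor in the antiderivative. -/
noncomputable def N (a b x t : ℝ) : ℝ :=
  ((b - a) / 2) ^ 2 - (t - (a + b) / 2) * (x - (a + b) / 2) + w a b t * WW a b x

/-- Antiderivative of `1/(√((t-a)(b-t))·(x-t))` on `(a,b) \ {x}`. -/
noncomputable def F (a b x t : ℝ) : ℝ :=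
  (1 / WW a b x) * (Real.log (N a b x t) - Real.log (t - x))

/-- The integrand. -/
noncomputable def f (a b x t : ℝ) : ℝ := 1 / (Real.sqrt ((t - a) * (b - t)) * (x - t))

variable {a b x : ℝ}

lemma WW_pos (hx : x ∈ Set.Ioo a b) : 0 < WW a b x :=
  Real.sqrt_pos.2 (mul_pos (sub_pos.2 hx.1) (sub_pos.2 hx.2))

lemma WW_sq (hx : x ∈ Set.Ioo a b) : (WW a b x) ^ 2 = (x - a) * (b - x) :=
  Real.sq_sqrt (mul_nonneg (sub_nonneg.2 hx.1.le) (sub_nonneg.2 hx.2.le))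

lemma w_pos {t : ℝ} (ht : t ∈ Set.Ioo a b) : 0 < w a b t :=
  Real.sqrt_pos.2 (mul_pos (sub_pos.2 ht.1) (sub_pos.2 ht.2))

lemma w_sq {t : ℝ} (ht : t ∈ Set.Icc a b) : (w a b t) ^ 2 = (t - a) * (b - t) :=
  Real.sq_sqrt (mul_nonneg (sub_nonneg.2 ht.1) (sub_nonneg.2 ht.2))

lemma N_pos (hx : x ∈ Set.Ioo a b) {t : ℝ} (ht : t ∈ Set.Icc a b) :
    0 < N a b x t := by
  have h1 : 0 ≤ w a b t * WW a b x :=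
    mul_nonneg (Real.sqrt_nonneg _) (Real.sqrt_nonneg _)
  have hxa : (0:ℝ) < x - a := sub_pos.2 hx.1
  have hbx : (0:ℝ) < b - x := sub_pos.2 hx.2
  have hta : (0:ℝ) ≤ t - a := sub_nonneg.2 ht.1
  have hbt : (0:ℝ) ≤ b - t := sub_nonneg.2 ht.2
  have h2 : 0 < ((b - a) / 2) ^ 2 - (t - (a + b) / 2) * (x - (a + b) / 2) := by
    rcases eq_or_lt_of_le hta with h | h
    · nlinarith
    · nlinarith [mul_pos h hbx, mul_nonneg hbt hxa.le]
  unfold N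
  linarith

lemma N_continuous : Continuous (N a b x) := by
  unfold N w
  fun_prop

lemma hasDerivAt_F (hx : x ∈ Set.Ioo a b) {t : ℝ} (ht : t ∈ Set.Ioo a b) (htx : t ≠ x) :
    HasDerivAt (F a b x) (f a b x t) t := by
  have hw : 0 < w a b t := w_pos ht
  have hN : 0 < N a b x t := N_pos hx (Set.mem_Icc_of_Ioo ht)
  have hW : 0 < WW a b x := WW_pos hx
  have hq : HasDerivAt (fun s : ℝ => (s - a) * (b - s)) (a + b - 2 * t) t := by
    have h := ((hasDerivAt_id' (x := t)).sub_const a).mul ((hasDerivAt_const t b).sub (hasDerivAt_id' (x := t)))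
    refine h.congr_deriv (Eq.symm ?_)
    simp only [Pi.sub_apply]; ring
  have hqt : (t - a) * (b - t) ≠ 0 :=
    ne_of_gt (mul_pos (sub_pos.2 ht.1) (sub_pos.2 ht.2))
  have hwD : HasDerivAt (w a b) ((a + b - 2 * t) / (2 * w a b t)) t := hq.sqrt hqt
  have hND : HasDerivAt (N a b x)
      (-(x - (a + b) / 2) + (a + b - 2 * t) / (2 * w a b t) * WW a b x) t := by
    have h1 : HasDerivAt (fun s : ℝ => ((b - a) / 2) ^ 2 - (s - (a + b) / 2) * (x - (a + b) / 2))
        (-(x - (a + b) / 2)) t := by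
      have h := (hasDerivAt_const t (((b - a) / 2) ^ 2)).sub
        (((hasDerivAt_id t).sub_const ((a + b) / 2)).mul_const (x - (a + b) / 2))
      refine h.congr_deriv (Eq.symm ?_)
      ring
    have h2 := hwD.mul_const (WW a b x)
    exact h1.add h2
  have hlogN : HasDerivAt (fun s => Real.log (N a b x s))
      ((-(x - (a + b) / 2) + (a + b - 2 * t) / (2 * w a b t) * WW a b x) / N a b x t) t :=
    hND.log hN.ne'
  have hlogd : HasDerivAt (fun s : ℝ => Real.log (s - x)) (1 / (t - x)) t := by
    have h := ((hasDerivAt_id t).sub_const x).log (sub_ne_zero.2 htx)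
    simpa using h
  have hder := (hlogN.sub hlogd).const_mul (1 / WW a b x)
  refine HasDerivAt.congr_deriv hder (Eq.symm ?_)
  -- value identity
  have hw2 : (w a b t) ^ 2 = (t - a) * (b - t) := w_sq (Set.mem_Icc_of_Ioo ht)
  have hW2 : (WW a b x) ^ 2 = (x - a) * (b - x) := WW_sq hx
  have htx' : t - x ≠ 0 := sub_ne_zero.2 htx
  have hxt' : x - t ≠ 0 := sub_ne_zero.2 (Ne.symm htx)
  set u := w a b t with hu
  set V := WW a b x with hV
  have hsq : Real.sqrt ((t - a) * (b - t)) = u := rfl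
  have hNN : N a b x t = ((b - a) / 2) ^ 2 - (t - (a + b) / 2) * (x - (a + b) / 2) + u * V := rfl
  have key : (t - x) * (-(x - (a + b) / 2) * u + ((a + b) / 2 - t) * V)
      - u * N a b x t + N a b x t * V = 0 := by
    rw [hNN]
    linear_combination u * hW2 - V * hw2
  have hA : -(x - (a + b) / 2) + (a + b - 2 * t) / (2 * u) * V
      = (-(x - (a + b) / 2) * u + ((a + b) / 2 - t) * V) / u := by
    field_simp
  have step : (-(x - (a + b) / 2) + (a + b - 2 * t) / (2 * u) * V) / N a b x t - 1 / (t - x)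
      = V / (u * (x - t)) := by
    rw [hA, div_div, div_sub_div _ _ (mul_ne_zero hw.ne' hN.ne') htx',
      div_eq_div_iff (mul_ne_zero (mul_ne_zero hw.ne' hN.ne') htx') (mul_ne_zero hw.ne' hxt')]
    linear_combination (u * (x - t)) * key
  unfold f
  rw [hsq, step]
  field_simp



lemma continuousAt_F (hx : x ∈ Set.Ioo a b) {t : ℝ} (ht : t ∈ Set.Icc a b) (htx : t ≠ x) :
    ContinuousAt (F a b x) t := by
  have hN := N_pos hx ht
  have h1 : ContinuousAt (fun s => Real.log (N a b x s)) t :=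
    (Real.continuousAt_log hN.ne').comp N_continuous.continuousAt
  have h2 : ContinuousAt (fun s : ℝ => Real.log (s - x)) t :=
    ContinuousAt.log ((continuous_id.sub continuous_const).continuousAt) (sub_ne_zero.2 htx)
  exact continuousAt_const.mul (h1.sub h2)

lemma f_measurable : Measurable (f a b x) := by
  unfold f
  fun_prop

lemma int_left (hx : x ∈ Set.Ioo a b) {ε : ℝ} (hε : 0 < ε) (hεa : a < x - ε) :
    IntegrableOn (f a b x) (Set.Ioc a (x - ε)) := by
  have hbx : (0:ℝ) < b - x := sub_pos.2 hx.2
  have hint : IntegrableOn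
      (fun t => (1 / (Real.sqrt (b - x) * ε)) * (t - a) ^ (-(1/2) : ℝ)) (Set.Ioc a (x - ε)) := by
    have h0 : IntervalIntegrable (fun s : ℝ => s ^ (-(1/2) : ℝ)) volume 0 (x - ε - a) :=
      intervalIntegral.intervalIntegrable_rpow' (by norm_num)
    have h1 := (h0.comp_sub_right a).const_mul (1 / (Real.sqrt (b - x) * ε))
    simp only [zero_add, sub_add_cancel] at h1
    exact (intervalIntegrable_iff_integrableOn_Ioc_of_le (by linarith)).1 h1
  refine hint.mono' (f_measurable.aestronglyMeasurable) ?_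
  filter_upwards [ae_restrict_mem measurableSet_Ioc] with t ht
  obtain ⟨hta, htb⟩ := ht
  have h1 : (0:ℝ) < t - a := sub_pos.2 hta
  have h2 : ε ≤ x - t := by linarith
  have h3 : (0:ℝ) < b - t := by linarith
  have hsp1 : (0:ℝ) < Real.sqrt (t - a) := Real.sqrt_pos.2 h1
  have hsp2 : (0:ℝ) < Real.sqrt (b - t) := Real.sqrt_pos.2 h3
  have hsp3 : (0:ℝ) < Real.sqrt (b - x) := Real.sqrt_pos.2 hbx
  have hwm : Real.sqrt ((t - a) * (b - t)) = Real.sqrt (t - a) * Real.sqrt (b - t) :=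
    Real.sqrt_mul h1.le _
  have hbd : Real.sqrt (b - x) * Real.sqrt (t - a) * ε ≤ Real.sqrt ((t - a) * (b - t)) * (x - t) := by
    rw [hwm]
    have hsq : Real.sqrt (b - x) ≤ Real.sqrt (b - t) := Real.sqrt_le_sqrt (by linarith)
    calc Real.sqrt (b - x) * Real.sqrt (t - a) * ε
        ≤ Real.sqrt (b - t) * Real.sqrt (t - a) * (x - t) := by gcongr
      _ = Real.sqrt (t - a) * Real.sqrt (b - t) * (x - t) := by ring
  have hrp : (t - a) ^ (-(1/2) : ℝ) = 1 / Real.sqrt (t - a) := by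
    rw [Real.rpow_neg h1.le, ← Real.sqrt_eq_rpow, one_div]
  have hfpos : (0:ℝ) < Real.sqrt ((t - a) * (b - t)) * (x - t) := by
    rw [hwm]; exact mul_pos (mul_pos hsp1 hsp2) (by linarith)
  have hnorm : ‖f a b x t‖ = 1 / (Real.sqrt ((t - a) * (b - t)) * (x - t)) := by
    unfold f
    rw [Real.norm_eq_abs, abs_of_pos (one_div_pos.2 hfpos)]
  rw [hnorm, hrp]
  calc 1 / (Real.sqrt ((t - a) * (b - t)) * (x - t))
      ≤ 1 / (Real.sqrt (b - x) * Real.sqrt (t - a) * ε) :=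
        one_div_le_one_div_of_le (by positivity) hbd
    _ = 1 / (Real.sqrt (b - x) * ε) * (1 / Real.sqrt (t - a)) := by ring

lemma int_right (hx : x ∈ Set.Ioo a b) {ε : ℝ} (hε : 0 < ε) (hεb : x + ε < b) :
    IntegrableOn (f a b x) (Set.Ioo (x + ε) b) := by
  have hxa : (0:ℝ) < x - a := sub_pos.2 hx.1
  have hint : IntegrableOn
      (fun t => (1 / (Real.sqrt (x - a) * ε)) * (b - t) ^ (-(1/2) : ℝ)) (Set.Ioo (x + ε) b) := by
    have h0 : IntervalIntegrable (fun s : ℝ => s ^ (-(1/2) : ℝ)) volume 0 (b - (x + ε)) :=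
      intervalIntegral.intervalIntegrable_rpow' (by norm_num)
    have h1 := ((h0.comp_sub_left b).const_mul (1 / (Real.sqrt (x - a) * ε))).symm
    simp only [sub_zero, sub_sub_cancel] at h1
    exact (integrableOn_Ioc_iff_integrableOn_Ioo).1
      ((intervalIntegrable_iff_integrableOn_Ioc_of_le (by linarith)).1 h1)
  refine hint.mono' (f_measurable.aestronglyMeasurable) ?_
  filter_upwards [ae_restrict_mem measurableSet_Ioo] with t ht
  obtain ⟨hta, htb⟩ := ht
  have h1 : (0:ℝ) < t - a := by linarith
  have h2 : ε ≤ t - x := by linarith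
  have h3 : (0:ℝ) < b - t := sub_pos.2 htb
  have hsp1 : (0:ℝ) < Real.sqrt (t - a) := Real.sqrt_pos.2 h1
  have hsp2 : (0:ℝ) < Real.sqrt (b - t) := Real.sqrt_pos.2 h3
  have hsp3 : (0:ℝ) < Real.sqrt (x - a) := Real.sqrt_pos.2 hxa
  have hwm : Real.sqrt ((t - a) * (b - t)) = Real.sqrt (t - a) * Real.sqrt (b - t) :=
    Real.sqrt_mul h1.le _
  have hbd : Real.sqrt (x - a) * Real.sqrt (b - t) * ε ≤ Real.sqrt ((t - a) * (b - t)) * (t - x) := by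
    rw [hwm]
    have hsq : Real.sqrt (x - a) ≤ Real.sqrt (t - a) := Real.sqrt_le_sqrt (by linarith)
    gcongr
  have hrp : (b - t) ^ (-(1/2) : ℝ) = 1 / Real.sqrt (b - t) := by
    rw [Real.rpow_neg h3.le, ← Real.sqrt_eq_rpow, one_div]
  have htx0 : (0:ℝ) < t - x := by linarith
  have hM : (0:ℝ) < Real.sqrt ((t - a) * (b - t)) * (t - x) := by
    rw [hwm]; exact mul_pos (mul_pos hsp1 hsp2) htx0
  have hnorm : ‖f a b x t‖ = 1 / (Real.sqrt ((t - a) * (b - t)) * (t - x)) := by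
    unfold f
    have hne : x - t = -(t - x) := by ring
    rw [Real.norm_eq_abs, hne, mul_neg, one_div, abs_inv, abs_neg, abs_of_pos hM, one_div]
  rw [hnorm, hrp]
  calc 1 / (Real.sqrt ((t - a) * (b - t)) * (t - x))
      ≤ 1 / (Real.sqrt (x - a) * Real.sqrt (b - t) * ε) :=
        one_div_le_one_div_of_le (by positivity) hbd
    _ = 1 / (Real.sqrt (x - a) * ε) * (1 / Real.sqrt (b - t)) := by ring

lemma integral_left (hx : x ∈ Set.Ioo a b) {ε : ℝ} (hε : 0 < ε) (hεa : a < x - ε) :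
    ∫ t in Set.Ioo a (x - ε), f a b x t = F a b x (x - ε) - F a b x a := by
  have hle : a ≤ x - ε := hεa.le
  have hxb : x < b := hx.2
  have hcont : ContinuousOn (F a b x) (Set.Icc a (x - ε)) := fun s hs =>
    (continuousAt_F hx ⟨hs.1, by linarith [hs.2]⟩ (by linarith [hs.2] : s ≠ x)).continuousWithinAt
  have hderiv : ∀ s ∈ Set.Ioo a (x - ε), HasDerivWithinAt (F a b x) (f a b x s) (Set.Ioi s) s :=
    fun s hs => (hasDerivAt_F hx ⟨hs.1, by linarith [hs.2]⟩
      (by linarith [hs.2] : s ≠ x)).hasDerivWithinAt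
  have hint : IntervalIntegrable (f a b x) volume a (x - ε) :=
    (intervalIntegrable_iff_integrableOn_Ioc_of_le hle).2 (int_left hx hε hεa)
  have h := intervalIntegral.integral_eq_sub_of_hasDeriv_right_of_le hle hcont hderiv hint
  rwa [intervalIntegral.integral_of_le hle, integral_Ioc_eq_integral_Ioo] at h

lemma integral_right (hx : x ∈ Set.Ioo a b) {ε : ℝ} (hε : 0 < ε) (hεb : x + ε < b) :
    ∫ t in Set.Ioo (x + ε) b, f a b x t = F a b x b - F a b x (x + ε) := by
  have hle : x + ε ≤ b := hεb.le
  have hax : a < x := hx.1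
  have hcont : ContinuousOn (F a b x) (Set.Icc (x + ε) b) := fun s hs =>
    (continuousAt_F hx ⟨by linarith [hs.1], hs.2⟩ (by linarith [hs.1] : s ≠ x)).continuousWithinAt
  have hderiv : ∀ s ∈ Set.Ioo (x + ε) b, HasDerivWithinAt (F a b x) (f a b x s) (Set.Ioi s) s :=
    fun s hs => (hasDerivAt_F hx ⟨by linarith [hs.1], hs.2⟩
      (by linarith [hs.1] : s ≠ x)).hasDerivWithinAt
  have hint : IntervalIntegrable (f a b x) volume (x + ε) b :=
    (intervalIntegrable_iff_integrableOn_Ioc_of_le hle).2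
      ((integrableOn_Ioc_iff_integrableOn_Ioo).2 (int_right hx hε hεb))
  have h := intervalIntegral.integral_eq_sub_of_hasDeriv_right_of_le hle hcont hderiv hint
  rwa [intervalIntegral.integral_of_le hle, integral_Ioc_eq_integral_Ioo] at h

lemma F_a (hab : a < b) (hx : x ∈ Set.Ioo a b) :
    F a b x a = (1 / WW a b x) * Real.log ((b - a) / 2) := by
  have hwa : w a b a = 0 := by unfold w; simp
  have hNa : N a b x a = ((b - a) / 2) * (x - a) := by unfold N; rw [hwa]; ring
  unfold F
  rw [hNa, Real.log_mul (ne_of_gt (by linarith : (0:ℝ) < (b - a) / 2)) (ne_of_gt (sub_pos.2 hx.1)),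
    show a - x = -(x - a) by ring, Real.log_neg_eq_log]
  ring

lemma F_b (hab : a < b) (hx : x ∈ Set.Ioo a b) :
    F a b x b = (1 / WW a b x) * Real.log ((b - a) / 2) := by
  have hwb : w a b b = 0 := by unfold w; simp
  have hNb : N a b x b = ((b - a) / 2) * (b - x) := by unfold N; rw [hwb]; ring
  unfold F
  rw [hNb, Real.log_mul (ne_of_gt (by linarith : (0:ℝ) < (b - a) / 2)) (ne_of_gt (sub_pos.2 hx.2))]
  ring

end Stmt6Aux

theorem stmt6' (a b : ℝ) (hab : a < b) (x : ℝ) (hx : x ∈ Set.Ioo a b) :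
    Filter.Tendsto
      (fun ε : ℝ => ∫ t in {t : ℝ | t ∈ Set.Ioo a b ∧ ε < |t - x|},
        1 / (Real.sqrt ((t - a) * (b - t)) * (x - t)))
      (nhdsWithin 0 (Set.Ioi 0)) (nhds 0) := by
  classical
  open Stmt6Aux in
  set G : ℝ → ℝ := fun ε =>
    (1 / WW a b x) * (Real.log (N a b x (x - ε)) - Real.log (N a b x (x + ε))) with hG
  have hax : a < x := hx.1
  have hxb : x < b := hx.2
  have hε₀ : (0:ℝ) < min (x - a) (b - x) := lt_min (by linarith) (by linarith)
  have hmem : Set.Ioo (0:ℝ) (min (x - a) (b - x)) ∈ nhdsWithin (0:ℝ) (Set.Ioi 0) :=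
    Ioo_mem_nhdsGT_of_mem ⟨le_refl 0, hε₀⟩
  have heq : ∀ ε ∈ Set.Ioo (0:ℝ) (min (x - a) (b - x)),
      (∫ t in {t : ℝ | t ∈ Set.Ioo a b ∧ ε < |t - x|},
        1 / (Real.sqrt ((t - a) * (b - t)) * (x - t))) = G ε := by
    intro ε hε
    obtain ⟨hε0, hεlt⟩ := hε
    have hεa : a < x - ε := by
      have := lt_of_lt_of_le hεlt (min_le_left _ _); linarith
    have hεb : x + ε < b := by
      have := lt_of_lt_of_le hεlt (min_le_right _ _); linarith
    have hset : {t : ℝ | t ∈ Set.Ioo a b ∧ ε < |t - x|}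
        = Set.Ioo a (x - ε) ∪ Set.Ioo (x + ε) b := by
      ext t
      simp only [Set.mem_setOf_eq, Set.mem_Ioo, Set.mem_union]
      constructor
      · rintro ⟨⟨h1, h2⟩, h3⟩
        rcases lt_abs.1 h3 with h | h
        · right; exact ⟨by linarith, h2⟩
        · left; exact ⟨h1, by linarith⟩
      · rintro (⟨h1, h2⟩ | ⟨h1, h2⟩)
        · exact ⟨⟨h1, by linarith⟩, lt_abs.2 (Or.inr (by linarith))⟩
        · exact ⟨⟨by linarith, h2⟩, lt_abs.2 (Or.inl (by linarith))⟩
    have hdisj : Disjoint (Set.Ioo a (x - ε)) (Set.Ioo (x + ε) b) := by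
      rw [Set.disjoint_left]
      rintro t ⟨h1, h2⟩ ⟨h3, h4⟩
      linarith
    show (∫ t in {t : ℝ | t ∈ Set.Ioo a b ∧ ε < |t - x|}, f a b x t) = G ε
    rw [hset, setIntegral_union hdisj measurableSet_Ioo
      ((int_left hx hε0 hεa).mono_set Set.Ioo_subset_Ioc_self) (int_right hx hε0 hεb),
      integral_left hx hε0 hεa, integral_right hx hε0 hεb, F_a hab hx, F_b hab hx, hG]
    unfold Stmt6Aux.F
    rw [show x - ε - x = -ε by ring, Real.log_neg_eq_log, show x + ε - x = ε by ring]
    ring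
  have hNx : (0:ℝ) < N a b x x := N_pos hx ⟨hax.le, hxb.le⟩
  have hGlim : Filter.Tendsto G (nhdsWithin 0 (Set.Ioi 0)) (nhds 0) := by
    have hc1 : ContinuousAt (fun ε : ℝ => Real.log (N a b x (x - ε))) 0 := by
      have h : ContinuousAt (fun ε : ℝ => N a b x (x - ε)) 0 :=
        (N_continuous.comp (continuous_const.sub continuous_id)).continuousAt
      exact ContinuousAt.log h (by simpa using hNx.ne')
    have hc2 : ContinuousAt (fun ε : ℝ => Real.log (N a b x (x + ε))) 0 := by
      have h : ContinuousAt (fun ε : ℝ => N a b x (x + ε)) 0 :=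
        (N_continuous.comp (continuous_const.add continuous_id)).continuousAt
      exact ContinuousAt.log h (by simpa using hNx.ne')
    have h : Filter.Tendsto G (nhds 0) (nhds (G 0)) :=
      ((hc1.sub hc2).const_mul (1 / WW a b x) : ContinuousAt G 0)
    have hG0 : G 0 = 0 := by simp [hG]
    rw [hG0] at h
    exact h.mono_left nhdsWithin_le_nhds
  exact hGlim.congr' (Filter.eventuallyEq_of_mem hmem heq).symm


/-- For `a < b` and `x ∈ (a,b)`, the principal value
`lim_{ε→0⁺} ∫_{t ∈ (a,b), |t−x|>ε} 1/(√((t−a)(b−t))·(x−t)) dt` vanishes: the function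
`t ↦ 1/√((t−a)(b−t))` is annihilated on `(a,b)` by the truncated Hilbert transform. -/
theorem stmt6 (a b : ℝ) (hab : a < b) (x : ℝ) (hx : x ∈ Set.Ioo a b) :
    Filter.Tendsto
      (fun ε : ℝ => ∫ t in {t : ℝ | t ∈ Set.Ioo a b ∧ ε < |t - x|},
        1 / (Real.sqrt ((t - a) * (b - t)) * (x - t)))
      (nhdsWithin 0 (Set.Ioi 0)) (nhds 0) := by
  exact stmt6' a b hab x hx
end

section
/- Let S and K be nonempty open bounded intervals of ℝ and let h > 0. For every m = (m₁,m₂) ∈ L²(S,ℝ²) and every φ ∈ L²(K), the duality identity ∫_K b₂[m](x) φ(x) dx = ∫_S m₁(t) ((∂ₓP_h) ⋆ φ̃)(t) dt + ∫_S m₂(t) ((∂ₓQ_h) ⋆ φ̃)(t) dt holds; that is, the adjoint of the field operator b₂ is the map b₂*: L²(K) → L²(S,ℝ²) given by b₂*[φ](t) = ( ((∂ₓP_h) ⋆ φ̃)(t), ((∂ₓQ_h) ⋆ φ̃)(t) ) for t ∈ S. -/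
open MeasureTheory

section Aux

lemma dPdx_cont {h : ℝ} (hh : 0 < h) : Continuous (dPdx h) := by
  unfold dPdx
  apply Continuous.div (by continuity) (by continuity)
  intro x
  positivity

lemma dQdx_cont {h : ℝ} (hh : 0 < h) : Continuous (dQdx h) := by
  unfold dQdx
  apply Continuous.div (by continuity) (by continuity)
  intro x
  positivity

lemma dPdx_odd (h x : ℝ) : dPdx h (-x) = -dPdx h x := by
  unfold dPdx; ring

lemma dQdx_even (h x : ℝ) : dQdx h (-x) = dQdx h x := by
  unfold dQdx; ring

lemma dPdx_bound {h : ℝ} (hh : 0 < h) (x : ℝ) :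
    |dPdx h x| ≤ 1 / (Real.pi * h ^ 2) := by
  have hπ : 0 < Real.pi := Real.pi_pos
  have hden : (0:ℝ) < (x ^ 2 + h ^ 2) ^ 2 := by positivity
  rw [dPdx, abs_div, div_le_iff₀ (abs_pos.mpr (ne_of_gt hden))]
  rw [abs_of_pos hden]
  rw [abs_mul]
  have h1 : |(-(1 / Real.pi))| = 1 / Real.pi := by
    rw [abs_neg, abs_of_pos (by positivity)]
  rw [h1]
  rw [div_mul_eq_mul_div, div_mul_eq_mul_div, div_le_div_iff₀ hπ (by positivity)]
  have h2 : |2 * x * h| ≤ x ^ 2 + h ^ 2 := by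
    rw [abs_le]; constructor <;> nlinarith [sq_nonneg (x + h), sq_nonneg (x - h)]
  have h4 : h ^ 2 ≤ x ^ 2 + h ^ 2 := by nlinarith [sq_nonneg x]
  have h5 : |2 * x * h| * h ^ 2 ≤ (x ^ 2 + h ^ 2) * (x ^ 2 + h ^ 2) :=
    mul_le_mul h2 h4 (by positivity) (by positivity)
  nlinarith [h5, hπ]

lemma dQdx_bound {h : ℝ} (hh : 0 < h) (x : ℝ) :
    |dQdx h x| ≤ 1 / (Real.pi * h ^ 2) := by
  have hπ : 0 < Real.pi := Real.pi_pos
  have hden : (0:ℝ) < (x ^ 2 + h ^ 2) ^ 2 := by positivity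
  rw [dQdx, abs_div, div_le_iff₀ (abs_pos.mpr (ne_of_gt hden))]
  rw [abs_of_pos hden]
  rw [abs_mul, abs_of_pos (show (0:ℝ) < 1 / Real.pi by positivity)]
  rw [div_mul_eq_mul_div, div_mul_eq_mul_div, div_le_div_iff₀ hπ (by positivity)]
  have h2 : |h ^ 2 - x ^ 2| ≤ x ^ 2 + h ^ 2 := by
    rw [abs_le]; constructor <;> nlinarith [sq_nonneg x, sq_nonneg h]
  have h4 : h ^ 2 ≤ x ^ 2 + h ^ 2 := by nlinarith [sq_nonneg x]
  have h5 : |h ^ 2 - x ^ 2| * h ^ 2 ≤ (x ^ 2 + h ^ 2) * (x ^ 2 + h ^ 2) :=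
    mul_le_mul h2 h4 (by positivity) (by positivity)
  nlinarith [h5, hπ]

lemma prodInt (k f g : ℝ → ℝ) (hk : Continuous k) {C : ℝ}
    (hC : ∀ x, |k x| ≤ C) (hf : Integrable f volume) (hg : Integrable g volume) :
    Integrable (fun z : ℝ × ℝ => k (z.1 - z.2) * f z.2 * g z.1)
      (volume.prod volume) := by
  have hC0 : (0:ℝ) ≤ C := le_trans (abs_nonneg _) (hC 0)
  have hfg : Integrable (fun z : ℝ × ℝ => g z.1 * f z.2) (volume.prod volume) :=
    hg.mul_prod hf
  have hfgn : Integrable (fun z : ℝ × ℝ => C * (|g z.1| * |f z.2|))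
      (volume.prod volume) := (hg.norm.mul_prod hf.norm).const_mul C
  have hrw : (fun z : ℝ × ℝ => k (z.1 - z.2) * f z.2 * g z.1)
      = fun z : ℝ × ℝ => k (z.1 - z.2) * (g z.1 * f z.2) := by
    funext z; ring
  rw [hrw]
  apply Integrable.mono' hfgn
  · exact ((hk.comp (continuous_fst.sub continuous_snd)).aestronglyMeasurable).mul
      hfg.aestronglyMeasurable
  · refine Filter.Eventually.of_forall fun z => ?_
    have : ‖k (z.1 - z.2) * (g z.1 * f z.2)‖
        = |k (z.1 - z.2)| * (|g z.1| * |f z.2|) := by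
      rw [Real.norm_eq_abs, abs_mul, abs_mul]
    rw [this]
    exact mul_le_mul_of_nonneg_right (hC _) (by positivity)

lemma keySwap (k f g : ℝ → ℝ) (hk : Continuous k) {C : ℝ}
    (hC : ∀ x, |k x| ≤ C) (hf : Integrable f volume) (hg : Integrable g volume) :
    ∫ x, conv k f x * g x = ∫ t, f t * ∫ x, k (x - t) * g x := by
  have hprod := prodInt k f g hk hC hf hg
  have h1 : ∀ x, conv k f x * g x = ∫ t, k (x - t) * f t * g x := by
    intro x
    rw [conv, ← integral_mul_const]
  simp_rw [h1]
  rw [integral_integral_swap (f := fun x t => k (x - t) * f t * g x) hprod]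
  congr 1
  funext t
  have h2 : ∀ x, k (x - t) * f t * g x = k (x - t) * g x * f t := by
    intro x; ring
  simp_rw [h2]
  rw [integral_mul_const, mul_comm]

lemma keyInt1 (k f g : ℝ → ℝ) (hk : Continuous k) {C : ℝ}
    (hC : ∀ x, |k x| ≤ C) (hf : Integrable f volume) (hg : Integrable g volume) :
    Integrable (fun x => conv k f x * g x) volume := by
  have h := (prodInt k f g hk hC hf hg).integral_prod_left
  have heq : (fun x => ∫ t, k (x - t) * f t * g x) = fun x => conv k f x * g x := by
    funext x
    rw [conv, ← integral_mul_const]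
  rw [← heq]
  exact h

end Aux

/-- Duality identity defining the adjoint `b₂*` of the field operator `b₂`:
for `m = (m₁,m₂) ∈ L²(S,ℝ²)` (extended by zero off `S = (a,b)`) and `φ ∈ L²(K)`,
`∫_K b₂[m] φ = ∫_S m₁ ((∂ₓP_h) ⋆ φ̃) + ∫_S m₂ ((∂ₓQ_h) ⋆ φ̃)`. -/
theorem stmt7 (a b c d h : ℝ) (hab : a < b) (hcd : c < d) (hh : 0 < h)
    (m₁ m₂ : ℝ → ℝ) (hm₁ : MemLp m₁ 2 volume) (hm₂ : MemLp m₂ 2 volume)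
    (hm₁S : ∀ t ∉ Set.Ioo a b, m₁ t = 0) (hm₂S : ∀ t ∉ Set.Ioo a b, m₂ t = 0)
    (φ : ℝ → ℝ) (hφ : MemLp φ 2 (volume.restrict (Set.Ioo c d))) :
    ∫ x in Set.Ioo c d, (-conv (dPdx h) m₁ x + conv (dQdx h) m₂ x) * φ x
      = (∫ t in Set.Ioo a b, m₁ t * conv (dPdx h) ((Set.Ioo c d).indicator φ) t)
        + ∫ t in Set.Ioo a b, m₂ t * conv (dQdx h) ((Set.Ioo c d).indicator φ) t := by
  set φt : ℝ → ℝ := (Set.Ioo c d).indicator φ with hφt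
  -- finiteness of restricted measures
  haveI hfinS : IsFiniteMeasure (volume.restrict (Set.Ioo a b)) := by
    constructor
    rw [Measure.restrict_apply_univ, Real.volume_Ioo]
    exact ENNReal.ofReal_lt_top
  haveI hfinK : IsFiniteMeasure (volume.restrict (Set.Ioo c d)) := by
    constructor
    rw [Measure.restrict_apply_univ, Real.volume_Ioo]
    exact ENNReal.ofReal_lt_top
  -- integrability of m₁, m₂, φt
  have hm₁i : Integrable m₁ volume := by
    have h1 : IntegrableOn m₁ (Set.Ioo a b) volume :=
      (hm₁.restrict _).integrable (by norm_num)
    have h2 : m₁ = (Set.Ioo a b).indicator m₁ := by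
      funext t
      by_cases ht : t ∈ Set.Ioo a b
      · simp [ht]
      · simp [ht, hm₁S t ht]
    rw [h2]
    exact h1.integrable_indicator measurableSet_Ioo
  have hm₂i : Integrable m₂ volume := by
    have h1 : IntegrableOn m₂ (Set.Ioo a b) volume :=
      (hm₂.restrict _).integrable (by norm_num)
    have h2 : m₂ = (Set.Ioo a b).indicator m₂ := by
      funext t
      by_cases ht : t ∈ Set.Ioo a b
      · simp [ht]
      · simp [ht, hm₂S t ht]
    rw [h2]
    exact h1.integrable_indicator measurableSet_Ioo
  have hφi : Integrable φt volume := by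
    have h1 : IntegrableOn φ (Set.Ioo c d) volume := hφ.integrable (by norm_num)
    exact h1.integrable_indicator measurableSet_Ioo
  -- LHS: set integral to full integral with indicator
  have hLHS : ∫ x in Set.Ioo c d, (-conv (dPdx h) m₁ x + conv (dQdx h) m₂ x) * φ x
      = ∫ x, (-conv (dPdx h) m₁ x + conv (dQdx h) m₂ x) * φt x := by
    rw [← integral_indicator measurableSet_Ioo]
    congr 1
    funext x
    by_cases hx : x ∈ Set.Ioo c d
    · simp [hφt, Set.indicator_of_mem hx]
    · simp [hφt, Set.indicator_of_notMem hx]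
  rw [hLHS]
  -- RHS: set integrals to full integrals
  have e₁ : ∫ t in Set.Ioo a b, m₁ t * conv (dPdx h) φt t
      = ∫ t, m₁ t * conv (dPdx h) φt t := by
    rw [← integral_indicator measurableSet_Ioo]
    congr 1
    funext t
    by_cases ht : t ∈ Set.Ioo a b
    · simp [Set.indicator_of_mem ht]
    · simp [Set.indicator_of_notMem ht, hm₁S t ht]
  have e₂ : ∫ t in Set.Ioo a b, m₂ t * conv (dQdx h) φt t
      = ∫ t, m₂ t * conv (dQdx h) φt t := by
    rw [← integral_indicator measurableSet_Ioo]
    congr 1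
    funext t
    by_cases ht : t ∈ Set.Ioo a b
    · simp [Set.indicator_of_mem ht]
    · simp [Set.indicator_of_notMem ht, hm₂S t ht]
  rw [e₁, e₂]
  -- split the sum
  have hsplit : ∀ x, (-conv (dPdx h) m₁ x + conv (dQdx h) m₂ x) * φt x
      = -(conv (dPdx h) m₁ x * φt x) + conv (dQdx h) m₂ x * φt x := by
    intro x; ring
  simp_rw [hsplit]
  have hI1 : Integrable (fun x => -(conv (dPdx h) m₁ x * φt x)) volume :=
    (keyInt1 (dPdx h) m₁ φt (dPdx_cont hh) (dPdx_bound hh) hm₁i hφi).neg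
  have hI2 : Integrable (fun x => conv (dQdx h) m₂ x * φt x) volume :=
    keyInt1 (dQdx h) m₂ φt (dQdx_cont hh) (dQdx_bound hh) hm₂i hφi
  rw [integral_add hI1 hI2, integral_neg]
  rw [keySwap (dPdx h) m₁ φt (dPdx_cont hh) (dPdx_bound hh) hm₁i hφi,
    keySwap (dQdx h) m₂ φt (dQdx_cont hh) (dQdx_bound hh) hm₂i hφi]
  -- use oddness / evenness of kernels
  have hP : ∀ t, (∫ x, dPdx h (x - t) * φt x) = -conv (dPdx h) φt t := by
    intro t
    rw [conv, ← integral_neg]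
    congr 1
    funext x
    rw [show x - t = -(t - x) by ring, dPdx_odd]
    ring
  have hQ : ∀ t, (∫ x, dQdx h (x - t) * φt x) = conv (dQdx h) φt t := by
    intro t
    rw [conv]
    congr 1
    funext x
    rw [show x - t = -(t - x) by ring, dQdx_even]
  simp_rw [hP, hQ, mul_neg]
  rw [integral_neg, neg_neg]
end

section
/- Let S and K be nonempty open bounded intervals of ℝ and let h > 0. The adjoint field operator b₂* is injective: if φ ∈ L²(K) satisfies ((∂ₓP_h) ⋆ φ̃)(t) = 0 and ((∂ₓQ_h) ⋆ φ̃)(t) = 0 for almost every t ∈ S, then φ = 0 almost everywhere on K. -/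
open MeasureTheory

open Metric Filter

noncomputable def CTn (c d : ℝ) (φ : ℝ → ℝ) (n : ℕ) (z : ℂ) : ℂ :=
  ∫ s in Set.Ioo c d, (φ s : ℂ) * (s:ℂ) ^ n * ((z - s)⁻¹)

noncomputable def CD (c d : ℝ) (φ : ℝ → ℝ) (z : ℂ) : ℂ :=
  ∫ s in Set.Ioo c d, (φ s : ℂ) * (((z - s) ^ 2)⁻¹)

lemma kernel_id {h : ℝ} (hh : 0 < h) (x : ℝ) :
    (((x:ℂ) + Complex.I * h) ^ 2)⁻¹
      = (Real.pi * Complex.I) * ((dPdx h x : ℂ) + Complex.I * (dQdx h x : ℂ)) := by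
  have hπ : (Real.pi : ℂ) ≠ 0 := by
    exact_mod_cast Real.pi_ne_zero
  have hx2 : (x ^ 2 + h ^ 2 : ℝ) ≠ 0 := by positivity
  have hx2' : ((x:ℂ) ^ 2 + (h:ℂ) ^ 2) ≠ 0 := by exact_mod_cast (by exact_mod_cast hx2 : ((x:ℝ)^2 + h^2 : ℝ) ≠ 0)
  have hz : ((x:ℂ) + Complex.I * h) ≠ 0 := by
    intro hzz
    have : ((x:ℂ) + Complex.I * h).im = 0 := by rw [hzz]; simp
    simp [Complex.add_im, Complex.mul_im] at this
    exact hh.ne' this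
  unfold dPdx dQdx
  push_cast
  field_simp
  ring_nf
  simp only [show Complex.I ^ 4 = 1 from by simp [pow_succ, Complex.I_sq],
    show Complex.I ^ 3 = -Complex.I from by simp [pow_succ, Complex.I_sq], Complex.I_sq]
  ring

lemma im_le_norm_sub (z : ℂ) (s : ℝ) : |z.im| ≤ ‖z - (s:ℂ)‖ := by
  have : (z - (s:ℂ)).im = z.im := by simp
  calc |z.im| = |(z - (s:ℂ)).im| := by rw [this]
    _ ≤ ‖z - (s:ℂ)‖ := Complex.abs_im_le_norm _
    _ = ‖z - (s:ℂ)‖ := rfl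

lemma sub_ne_zero_of_im {z : ℂ} (hz : 0 < z.im) (s : ℝ) : z - (s:ℂ) ≠ 0 := by
  intro h
  have := im_le_norm_sub z s
  rw [h] at this
  simp at this
  nlinarith [abs_nonneg z.im, le_abs_self z.im]

lemma knorm {z : ℂ} (hz : 0 < z.im) (s : ℝ) (p : ℕ) :
    ‖(((z - (s:ℂ)) ^ p)⁻¹ : ℂ)‖ ≤ (z.im⁻¹) ^ p := by
  have h1 : z.im ≤ ‖z - (s:ℂ)‖ := le_trans (le_abs_self _) (im_le_norm_sub z s)
  rw [norm_inv, norm_pow]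
  rw [inv_pow]
  apply inv_anti₀ (pow_pos hz p)
  exact pow_le_pow_left₀ hz.le h1 p

lemma kcont {z : ℂ} (hz : 0 < z.im) (p : ℕ) :
    Continuous fun s : ℝ => (((z - (s:ℂ)) ^ p)⁻¹ : ℂ) := by
  apply Continuous.inv₀
  · fun_prop
  · intro s
    exact pow_ne_zero p (sub_ne_zero_of_im hz s)

/-- master integrability lemma -/
lemma int_aux {c d : ℝ} {φ : ℝ → ℝ}
    (hIφ : Integrable φ (volume.restrict (Set.Ioo c d)))
    {k : ℝ → ℂ} {B : ℝ} (hk : Continuous k) (hkB : ∀ s, ‖k s‖ ≤ B) (n : ℕ) :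
    Integrable (fun s => (φ s : ℂ) * (s : ℂ) ^ n * k s) (volume.restrict (Set.Ioo c d)) := by
  set M : ℝ := max |c| |d| with hM
  have hM0 : 0 ≤ M := le_trans (abs_nonneg c) (le_max_left _ _)
  refine Integrable.mono' ((hIφ.abs.const_mul (M ^ n * B))) ?_ ?_
  · exact ((Complex.continuous_ofReal.comp_aestronglyMeasurable hIφ.1).mul
      ((Complex.continuous_ofReal.pow n).aestronglyMeasurable)).mul hk.aestronglyMeasurable
  · filter_upwards [ae_restrict_mem measurableSet_Ioo] with s hs
    have hsM : |s| ≤ M := by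
      rw [abs_le]
      constructor
      · calc -M ≤ -|c| := by simp [hM]
          _ ≤ c := neg_abs_le c
          _ ≤ s := hs.1.le
      · calc s ≤ d := hs.2.le
          _ ≤ |d| := le_abs_self d
          _ ≤ M := le_max_right _ _
    have hBnn : 0 ≤ B := le_trans (norm_nonneg (k 0)) (hkB 0)
    calc ‖(φ s : ℂ) * (s:ℂ) ^ n * k s‖ = |φ s| * |s| ^ n * ‖k s‖ := by
          simp [norm_mul, norm_pow, Complex.norm_real]
      _ ≤ |φ s| * M ^ n * B := by
          apply mul_le_mul (mul_le_mul le_rfl (pow_le_pow_left₀ (abs_nonneg s) hsM n)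
            (pow_nonneg (abs_nonneg s) n) (abs_nonneg _)) (hkB s) (norm_nonneg _)
            (by positivity)
      _ = M ^ n * B * |φ s| := by ring

lemma ball_im {z x : ℂ} (hz : 0 < z.im) (hx : x ∈ ball z (z.im / 2)) :
    z.im / 2 ≤ x.im := by
  have h1 : |x.im - z.im| ≤ ‖x - z‖ := by
    have := Complex.abs_im_le_norm (x - z)
    simpa using this
  have h2 : ‖x - z‖ < z.im / 2 := by simpa [dist_eq_norm] using hx
  have := abs_lt.mp (lt_of_le_of_lt h1 h2)
  linarith [this.1]

lemma hasDerivAt_CT {c d : ℝ} {φ : ℝ → ℝ}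
    (hIφ : Integrable φ (volume.restrict (Set.Ioo c d)))
    {z : ℂ} (hz : 0 < z.im) :
    HasDerivAt (CTn c d φ 0) (-(CD c d φ z)) z := by
  set μ := volume.restrict (Set.Ioo c d)
  set F : ℂ → ℝ → ℂ := fun x a => (φ a : ℂ) * (a:ℂ) ^ 0 * ((x - a)⁻¹) with hF
  set F' : ℂ → ℝ → ℂ := fun x a => -((φ a : ℂ) * (((x - a) ^ 2)⁻¹)) with hF'
  have meas : ∀ x : ℂ, AEStronglyMeasurable (F x) μ := by
    intro x
    exact ((Complex.continuous_ofReal.comp_aestronglyMeasurable hIφ.1).mul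
      ((Complex.continuous_ofReal.pow 0).aestronglyMeasurable)).mul
      (Measurable.aestronglyMeasurable
        ((measurable_const.sub Complex.measurable_ofReal).inv))
  have meas' : AEStronglyMeasurable (F' z) μ := by
    exact ((Complex.continuous_ofReal.comp_aestronglyMeasurable hIφ.1).mul
      (Measurable.aestronglyMeasurable
        (((measurable_const.sub Complex.measurable_ofReal).pow_const 2).inv))).neg
  have key := hasDerivAt_integral_of_dominated_loc_of_deriv_le (μ := μ)
    (F := F) (F' := F') (x₀ := z) (bound := fun a => |φ a| * ((z.im / 2)⁻¹) ^ 2)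
    (ball_mem_nhds z (half_pos hz)) (Filter.Eventually.of_forall meas)
    (by simpa [hF, pow_zero, mul_one, pow_one] using
      int_aux hIφ (kcont hz 1) (fun s => knorm hz s 1) 0)
    meas'
    (Filter.Eventually.of_forall fun a => fun x hx => ?_)
    (hIφ.abs.mul_const _)
    (Filter.Eventually.of_forall fun a => fun x hx => ?_)
  · have : (∫ a, F' z a ∂μ) = -(CD c d φ z) := by
      rw [hF']
      rw [integral_neg]
      rfl
    rw [this] at key
    exact key.2
  · -- bound
    have hxim : 0 < x.im := lt_of_lt_of_le (half_pos hz) (ball_im hz hx)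
    calc ‖F' x a‖ = |φ a| * ‖((x - a) ^ 2)⁻¹‖ := by
          simp [hF', norm_mul, Complex.norm_real]
      _ ≤ |φ a| * (x.im⁻¹) ^ 2 := by
          apply mul_le_mul_of_nonneg_left (knorm hxim a 2) (abs_nonneg _)
      _ ≤ |φ a| * ((z.im / 2)⁻¹) ^ 2 := by
          apply mul_le_mul_of_nonneg_left _ (abs_nonneg _)
          apply pow_le_pow_left₀ (inv_nonneg.mpr hxim.le)
          exact inv_anti₀ (half_pos hz) (ball_im hz hx)
  · -- differentiability
    have hxim : 0 < x.im := lt_of_lt_of_le (half_pos hz) (ball_im hz hx)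
    have hne : x - (a:ℂ) ≠ 0 := sub_ne_zero_of_im hxim a
    have h1 : HasDerivAt (fun y : ℂ => (y - (a:ℂ))⁻¹) (-1 / (x - a) ^ 2) x := by
      have := ((hasDerivAt_id x).sub_const (a:ℂ)).inv hne
      exact this
    have h2 := h1.const_mul ((φ a : ℂ) * (a:ℂ) ^ 0)
    convert h2 using 1
    · rfl
    · simp only [hF']
      ring

lemma isOpen_UHP : IsOpen {z : ℂ | 0 < z.im} := by
  exact isOpen_lt continuous_const Complex.continuous_im

lemma CD_eq_zero {a b c d h : ℝ} (hab : a < b) (hh : 0 < h) {φ : ℝ → ℝ}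
    (hIφ : Integrable φ (volume.restrict (Set.Ioo c d)))
    (hz0 : ∀ᵐ (t : ℝ) ∂(volume.restrict (Set.Ioo a b)), CD c d φ ((t:ℂ) + Complex.I * h) = 0) :
    ∀ z : ℂ, 0 < z.im → CD c d φ z = 0 := by
  set UHP : Set ℂ := {z : ℂ | 0 < z.im} with hUHP
  -- analyticity of CD on UHP
  have hdiff : DifferentiableOn ℂ (CTn c d φ 0) UHP := fun z hz =>
    ((hasDerivAt_CT hIφ hz).differentiableAt).differentiableWithinAt
  have hanCT : AnalyticOnNhd ℂ (CTn c d φ 0) UHP := hdiff.analyticOnNhd isOpen_UHP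
  have hanCD : AnalyticOnNhd ℂ (CD c d φ) UHP := by
    have h1 : AnalyticOnNhd ℂ (deriv (CTn c d φ 0)) UHP := hanCT.deriv_of_isOpen isOpen_UHP
    have h2 : AnalyticOnNhd ℂ (fun z => -(CD c d φ z)) UHP :=
      h1.congr isOpen_UHP (fun z hz => (hasDerivAt_CT hIφ hz).deriv)
    have h3 := h2.neg
    exact h3.congr isOpen_UHP (fun z _ => by simp)
  -- the zero set
  set Z : Set ℝ := {t | t ∈ Set.Ioo a b ∧ CD c d φ ((t:ℂ) + Complex.I * h) = 0} with hZ
  have hZinf : Z.Infinite := by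
    by_contra hinf
    rw [Set.not_infinite] at hinf
    have hfin := hinf
    have h0 : volume.restrict (Set.Ioo a b)
        {t : ℝ | ¬ CD c d φ ((t:ℂ) + Complex.I * h) = 0} = 0 := ae_iff.mp hz0
    rw [Measure.restrict_apply' measurableSet_Ioo] at h0
    have hsub : Set.Ioo a b ⊆ Z ∪ ({t : ℝ | ¬ CD c d φ ((t:ℂ) + Complex.I * h) = 0} ∩ Set.Ioo a b) := by
      intro t ht
      by_cases hc : CD c d φ ((t:ℂ) + Complex.I * h) = 0
      · exact Or.inl ⟨ht, hc⟩
      · exact Or.inr ⟨hc, ht⟩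
    have := (measure_mono (μ := (volume : Measure ℝ)) hsub).trans (measure_union_le _ _)
    rw [hfin.measure_zero volume, h0, Real.volume_Ioo] at this
    simp only [zero_add, nonpos_iff_eq_zero, ENNReal.ofReal_eq_zero] at this
    linarith
  obtain ⟨x₀, hx₀K, hx₀acc⟩ := hZinf.exists_accPt_of_subset_isCompact isCompact_Icc
    (fun t ht => Set.Ioo_subset_Icc_self ht.1)
  set z₀ : ℂ := (x₀:ℂ) + Complex.I * h with hz₀
  have hz₀mem : z₀ ∈ UHP := by simp [hUHP, hz₀, hh]
  have freq : ∃ᶠ y in nhds x₀, y ≠ x₀ ∧ y ∈ Z := accPt_iff_frequently.mp hx₀acc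
  have tend : Filter.Tendsto (fun t : ℝ => (t:ℂ) + Complex.I * h) (nhds x₀) (nhds z₀) := by
    exact (Continuous.tendsto (by fun_prop) x₀)
  have freq2 : ∃ᶠ w in nhds z₀, CD c d φ w = 0 ∧ w ∈ ({z₀}ᶜ : Set ℂ) := by
    apply tend.frequently
    apply freq.mono
    rintro y ⟨hy1, hy2⟩
    refine ⟨hy2.2, ?_⟩
    simp only [Set.mem_compl_iff, Set.mem_singleton_iff, hz₀]
    intro heq
    apply hy1
    have : (y:ℂ) = (x₀:ℂ) := by
      have := add_right_cancel heq
      exact this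
    exact_mod_cast this
  have freq3 : ∃ᶠ w in nhdsWithin z₀ {z₀}ᶜ, CD c d φ w = 0 :=
    (frequently_nhdsWithin_iff).mpr freq2
  have := hanCD.eqOn_zero_of_preconnected_of_frequently_eq_zero
    (convex_halfSpace_im_gt (r := 0)).isPreconnected hz₀mem freq3
  intro z hz
  exact this hz

noncomputable def wseq (m : ℕ) : ℂ := (((m:ℝ) + 1 : ℝ) : ℂ) * Complex.I

lemma wseq_im (m : ℕ) : (wseq m).im = (m:ℝ) + 1 := by simp [wseq]

lemma wseq_im_pos (m : ℕ) : 0 < (wseq m).im := by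
  rw [wseq_im]; positivity

lemma inv_wsub_tendsto (s : ℝ) : Tendsto (fun m : ℕ => (wseq m - (s:ℂ))⁻¹) atTop (nhds 0) := by
  apply squeeze_zero_norm (a := fun m : ℕ => ((m:ℝ) + 1)⁻¹)
  · intro m
    have := knorm (wseq_im_pos m) s 1
    simpa [pow_one, wseq_im] using this
  · exact tendsto_one_div_add_atTop_nhds_zero_nat.congr (by intro m; rw [one_div])

lemma wseq_norm (m : ℕ) : ‖wseq m‖ = (m:ℝ) + 1 := by
  rw [wseq, norm_mul, Complex.norm_real, Real.norm_eq_abs,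
    Complex.norm_I, abs_of_nonneg (by positivity : (0:ℝ) ≤ (m:ℝ)+1), mul_one]

lemma CT_eq_zero {c d : ℝ} {φ : ℝ → ℝ}
    (hIφ : Integrable φ (volume.restrict (Set.Ioo c d)))
    (hCD : ∀ z : ℂ, 0 < z.im → CD c d φ z = 0) :
    ∀ z : ℂ, 0 < z.im → CTn c d φ 0 z = 0 := by
  have hconst : ∀ z w : ℂ, 0 < z.im → 0 < w.im → CTn c d φ 0 z = CTn c d φ 0 w := by
    intro z w hz hw
    have key := Convex.norm_image_sub_le_of_norm_hasFDerivWithin_le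
      (f := CTn c d φ 0) (f' := fun _ => (0 : ℂ →L[ℂ] ℂ)) (C := 0)
      (fun x hx => by
        have h1 : HasDerivAt (CTn c d φ 0) 0 x := by
          have := hasDerivAt_CT hIφ hx
          rwa [hCD x hx, neg_zero] at this
        have := h1.hasFDerivAt
        have h0 : ContinuousLinearMap.toSpanSingleton ℂ (0:ℂ) = 0 := by
          ext v
          simp
        rw [h0] at this
        exact this.hasFDerivWithinAt)
      (fun x _ => by simp) (convex_halfSpace_im_gt (r := 0)) hw hz
    have : ‖CTn c d φ 0 z - CTn c d φ 0 w‖ ≤ 0 := by simpa using key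
    have h2 : CTn c d φ 0 z - CTn c d φ 0 w = 0 := by
      have := norm_nonneg (CTn c d φ 0 z - CTn c d φ 0 w)
      have h3 : ‖CTn c d φ 0 z - CTn c d φ 0 w‖ = 0 := le_antisymm ‹_› ‹_›
      exact norm_eq_zero.mp h3
    exact sub_eq_zero.mp h2
  have hlim : Tendsto (fun m : ℕ => CTn c d φ 0 (wseq m)) atTop (nhds 0) := by
    have h0 : (0:ℂ) = ∫ s in Set.Ioo c d, (0:ℂ) := by simp
    rw [h0]
    apply tendsto_integral_of_dominated_convergence (bound := fun s => |φ s|)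
    · intro m
      exact (int_aux hIφ (k := fun s => (wseq m - (s:ℂ))⁻¹)
        (by
          have := sub_ne_zero_of_im (wseq_im_pos m)
          exact Continuous.inv₀ (by fun_prop) this) (B := ((m:ℝ)+1)⁻¹)
        (fun s => by simpa [pow_one, wseq_im] using knorm (wseq_im_pos m) s 1) 0).aestronglyMeasurable
    · exact hIφ.abs
    · intro m
      filter_upwards with s
      have hk := knorm (wseq_im_pos m) s 1
      have h1 : ((m:ℝ)+1)⁻¹ ≤ 1 := by
        rw [inv_le_one_iff₀]; right; linarith [Nat.cast_nonneg (α := ℝ) m]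
      calc ‖(φ s : ℂ) * (s:ℂ) ^ 0 * (wseq m - (s:ℂ))⁻¹‖
          = |φ s| * ‖(wseq m - (s:ℂ))⁻¹‖ := by simp [Complex.norm_real]
        _ ≤ |φ s| * 1 := by
            apply mul_le_mul_of_nonneg_left _ (abs_nonneg _)
            exact le_trans (by simpa [pow_one, wseq_im] using hk) h1
        _ = |φ s| := mul_one _
    · filter_upwards with s
      have := (inv_wsub_tendsto s).const_mul ((φ s : ℂ) * (s:ℂ) ^ 0)
      simpa using this
  intro z hz
  have heq : ∀ m : ℕ, CTn c d φ 0 (wseq m) = CTn c d φ 0 z :=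
    fun m => hconst _ _ (wseq_im_pos m) hz
  have : Tendsto (fun _ : ℕ => CTn c d φ 0 z) atTop (nhds 0) := hlim.congr heq
  exact tendsto_nhds_unique tendsto_const_nhds this

lemma Mn_eq_zero {c d : ℝ} {φ : ℝ → ℝ}
    (hIφ : Integrable φ (volume.restrict (Set.Ioo c d)))
    (n : ℕ) (hn : ∀ z : ℂ, 0 < z.im → CTn c d φ n z = 0) :
    (∫ s in Set.Ioo c d, (φ s : ℂ) * (s:ℂ) ^ n) = 0 := by
  set M : ℝ := max |c| |d| with hM
  have hM0 : 0 ≤ M := le_trans (abs_nonneg c) (le_max_left _ _)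
  have hbd : ∀ᵐ s ∂(volume.restrict (Set.Ioo c d)), |s| ≤ M := by
    filter_upwards [ae_restrict_mem measurableSet_Ioo] with s hs
    rw [abs_le]
    constructor
    · calc -M ≤ -|c| := by simp [hM]
        _ ≤ c := neg_abs_le c
        _ ≤ s := hs.1.le
    · calc s ≤ d := hs.2.le
        _ ≤ |d| := le_abs_self d
        _ ≤ M := le_max_right _ _
  have key : Tendsto
      (fun m : ℕ => ∫ s in Set.Ioo c d, (φ s : ℂ) * (s:ℂ) ^ n * (wseq m * (wseq m - (s:ℂ))⁻¹))
      atTop (nhds (∫ s in Set.Ioo c d, (φ s : ℂ) * (s:ℂ) ^ n)) := by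
    have hfe : (∫ s in Set.Ioo c d, (φ s : ℂ) * (s:ℂ) ^ n)
        = ∫ s in Set.Ioo c d, (φ s : ℂ) * (s:ℂ) ^ n * 1 := by simp
    rw [hfe]
    apply tendsto_integral_of_dominated_convergence (bound := fun s => |φ s| * M ^ n)
    · intro m
      refine (int_aux hIφ (k := fun s => wseq m * (wseq m - (s:ℂ))⁻¹) ?_ (B := 1) ?_ n).aestronglyMeasurable
      · exact continuous_const.mul (Continuous.inv₀ (by fun_prop) (sub_ne_zero_of_im (wseq_im_pos m)))
      · intro s
        rw [norm_mul]
        have h1 : ‖wseq m‖ = (m:ℝ) + 1 := wseq_norm m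
        have h2 : ‖(wseq m - (s:ℂ))⁻¹‖ ≤ ((m:ℝ) + 1)⁻¹ := by
          simpa [pow_one, wseq_im] using knorm (wseq_im_pos m) s 1
        calc ‖wseq m‖ * ‖(wseq m - (s:ℂ))⁻¹‖ ≤ ((m:ℝ)+1) * ((m:ℝ)+1)⁻¹ := by
              rw [h1]; exact mul_le_mul_of_nonneg_left h2 (by positivity)
          _ = 1 := mul_inv_cancel₀ (by positivity)
    · exact hIφ.abs.mul_const _
    · intro m
      filter_upwards [hbd] with s hs
      have h1 : ‖wseq m * (wseq m - (s:ℂ))⁻¹‖ ≤ 1 := by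
        rw [norm_mul]
        have ha : ‖wseq m‖ = (m:ℝ) + 1 := wseq_norm m
        have hb : ‖(wseq m - (s:ℂ))⁻¹‖ ≤ ((m:ℝ) + 1)⁻¹ := by
          simpa [pow_one, wseq_im] using knorm (wseq_im_pos m) s 1
        calc ‖wseq m‖ * ‖(wseq m - (s:ℂ))⁻¹‖ ≤ ((m:ℝ)+1) * ((m:ℝ)+1)⁻¹ := by
              rw [ha]; exact mul_le_mul_of_nonneg_left hb (by positivity)
          _ = 1 := mul_inv_cancel₀ (by positivity)
      calc ‖(φ s : ℂ) * (s:ℂ) ^ n * (wseq m * (wseq m - (s:ℂ))⁻¹)‖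
          = |φ s| * |s| ^ n * ‖wseq m * (wseq m - (s:ℂ))⁻¹‖ := by
            simp [norm_mul, Complex.norm_real]
        _ ≤ |φ s| * M ^ n * 1 := by
            apply mul_le_mul (mul_le_mul le_rfl (pow_le_pow_left₀ (abs_nonneg s) hs n)
              (pow_nonneg (abs_nonneg s) n) (abs_nonneg _)) h1 (norm_nonneg _) (by positivity)
        _ = |φ s| * M ^ n := mul_one _
    · filter_upwards with s
      have h2 : Tendsto (fun m : ℕ => wseq m * (wseq m - (s:ℂ))⁻¹) atTop (nhds 1) := by
        have h3 : Tendsto (fun m : ℕ => 1 + (s:ℂ) * (wseq m - (s:ℂ))⁻¹) atTop (nhds 1) := by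
          have := (inv_wsub_tendsto s).const_mul (s:ℂ)
          have h4 := (tendsto_const_nhds (α := ℕ) (x := (1:ℂ)) (f := atTop)).add this
          simpa using h4
        apply h3.congr
        intro m
        have hne : wseq m - (s:ℂ) ≠ 0 := sub_ne_zero_of_im (wseq_im_pos m) s
        field_simp
        ring
      have := h2.const_mul ((φ s : ℂ) * (s:ℂ) ^ n)
      simpa [mul_comm] using this.congr (fun m => by ring)
  have hzero : ∀ m : ℕ, (∫ s in Set.Ioo c d, (φ s : ℂ) * (s:ℂ) ^ n * (wseq m * (wseq m - (s:ℂ))⁻¹)) = 0 := by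
    intro m
    have h1 : (fun s : ℝ => (φ s : ℂ) * (s:ℂ) ^ n * (wseq m * (wseq m - (s:ℂ))⁻¹))
        = fun s : ℝ => wseq m * ((φ s : ℂ) * (s:ℂ) ^ n * (wseq m - (s:ℂ))⁻¹) := by
      ext s; ring
    rw [h1, integral_const_mul]
    rw [show (∫ s in Set.Ioo c d, (φ s : ℂ) * (s:ℂ) ^ n * (wseq m - (s:ℂ))⁻¹) = CTn c d φ n (wseq m) from rfl, hn (wseq m) (wseq_im_pos m), mul_zero]
  have : Tendsto (fun _ : ℕ => (0:ℂ)) atTop (nhds (∫ s in Set.Ioo c d, (φ s : ℂ) * (s:ℂ) ^ n)) := by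
    apply key.congr
    intro m
    rw [hzero m]
  exact tendsto_nhds_unique this tendsto_const_nhds

lemma CTn_zero_all {c d : ℝ} {φ : ℝ → ℝ}
    (hIφ : Integrable φ (volume.restrict (Set.Ioo c d)))
    (hCT0 : ∀ z : ℂ, 0 < z.im → CTn c d φ 0 z = 0) :
    ∀ n : ℕ, ∀ z : ℂ, 0 < z.im → CTn c d φ n z = 0 := by
  intro n
  induction n with
  | zero => exact hCT0
  | succ n ih =>
    intro z hz
    have hMn : (∫ s in Set.Ioo c d, (φ s : ℂ) * (s:ℂ) ^ n) = 0 := Mn_eq_zero hIφ n ih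
    have hint1 : Integrable (fun s => z * ((φ s : ℂ) * (s:ℂ) ^ n * ((z - s)⁻¹)))
        (volume.restrict (Set.Ioo c d)) := by
      apply Integrable.const_mul
      exact int_aux hIφ (k := fun s => (z - (s:ℂ))⁻¹)
        (Continuous.inv₀ (by fun_prop) (sub_ne_zero_of_im hz)) (B := z.im⁻¹)
        (fun s => by simpa [pow_one] using knorm hz s 1) n
    have hint2 : Integrable (fun s => (φ s : ℂ) * (s:ℂ) ^ n)
        (volume.restrict (Set.Ioo c d)) := by
      have := int_aux hIφ (k := fun _ : ℝ => (1:ℂ)) continuous_const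
        (B := 1) (fun s => by simp) n
      simpa using this
    have heq : ∀ s : ℝ, (φ s : ℂ) * (s:ℂ) ^ (n+1) * ((z - s)⁻¹)
        = z * ((φ s : ℂ) * (s:ℂ) ^ n * ((z - s)⁻¹)) - (φ s : ℂ) * (s:ℂ) ^ n := by
      intro s
      have hne : z - (s:ℂ) ≠ 0 := sub_ne_zero_of_im hz s
      field_simp
      ring
    calc CTn c d φ (n+1) z
        = ∫ s in Set.Ioo c d, (z * ((φ s : ℂ) * (s:ℂ) ^ n * ((z - s)⁻¹)) - (φ s : ℂ) * (s:ℂ) ^ n) := by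
          rw [CTn]
          exact integral_congr_ae (Filter.Eventually.of_forall heq)
      _ = z * CTn c d φ n z - ∫ s in Set.Ioo c d, (φ s : ℂ) * (s:ℂ) ^ n := by
          rw [integral_sub hint1 hint2, integral_const_mul]; rfl
      _ = 0 := by rw [ih z hz, hMn, mul_zero, sub_zero]

lemma real_moments {c d : ℝ} {φ : ℝ → ℝ}
    (hIφ : Integrable φ (volume.restrict (Set.Ioo c d)))
    (hCT0 : ∀ z : ℂ, 0 < z.im → CTn c d φ 0 z = 0) :
    ∀ n : ℕ, (∫ s in Set.Ioo c d, φ s * s ^ n) = 0 := by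
  intro n
  have h1 : (∫ s in Set.Ioo c d, (φ s : ℂ) * (s:ℂ) ^ n) = 0 :=
    Mn_eq_zero hIφ n (CTn_zero_all hIφ hCT0 n)
  have h2 : (∫ s in Set.Ioo c d, (φ s : ℂ) * (s:ℂ) ^ n)
      = ((∫ s in Set.Ioo c d, φ s * s ^ n : ℝ) : ℂ) := by
    have h4 : (∫ s in Set.Ioo c d, (φ s : ℂ) * (s:ℂ) ^ n)
        = ∫ s in Set.Ioo c d, ((φ s * s ^ n : ℝ) : ℂ) := by
      apply integral_congr_ae
      filter_upwards with s
      push_cast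
      ring
    exact h4.trans integral_ofReal
  rw [h2] at h1
  exact_mod_cast h1

lemma int_aux_real {c d : ℝ} {φ : ℝ → ℝ}
    (hIφ : Integrable φ (volume.restrict (Set.Ioo c d)))
    (n : ℕ) : Integrable (fun s => φ s * s ^ n) (volume.restrict (Set.Ioo c d)) := by
  set M : ℝ := max |c| |d| with hM
  have hM0 : 0 ≤ M := le_trans (abs_nonneg c) (le_max_left _ _)
  refine Integrable.mono' (hIφ.abs.const_mul (M ^ n)) ?_ ?_
  · exact hIφ.1.mul ((continuous_pow n).aestronglyMeasurable)
  · filter_upwards [ae_restrict_mem measurableSet_Ioo] with s hs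
    have hsM : |s| ≤ M := by
      rw [abs_le]
      refine ⟨?_, ?_⟩
      · calc -M ≤ -|c| := by simp [hM]
          _ ≤ c := neg_abs_le c
          _ ≤ s := hs.1.le
      · calc s ≤ d := hs.2.le
          _ ≤ |d| := le_abs_self d
          _ ≤ M := le_max_right _ _
    calc ‖φ s * s ^ n‖ = |φ s| * |s| ^ n := by
          rw [Real.norm_eq_abs, abs_mul, abs_pow]
      _ ≤ |φ s| * M ^ n := by
          exact mul_le_mul_of_nonneg_left (pow_le_pow_left₀ (abs_nonneg s) hsM n) (abs_nonneg _)
      _ = M ^ n * |φ s| := mul_comm _ _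

lemma cont_mul_int {c d : ℝ} {φ : ℝ → ℝ}
    (hIφ : Integrable φ (volume.restrict (Set.Ioo c d)))
    {g : ℝ → ℝ} (hg : Continuous g) :
    Integrable (fun s => g s * φ s) (volume.restrict (Set.Ioo c d)) := by
  obtain ⟨C, hC⟩ := (isCompact_Icc (a := c) (b := d)).exists_bound_of_continuousOn
    hg.continuousOn
  refine Integrable.mono' (hIφ.abs.const_mul C) ?_ ?_
  · exact hg.aestronglyMeasurable.mul hIφ.1
  · filter_upwards [ae_restrict_mem measurableSet_Ioo] with s hs
    calc ‖g s * φ s‖ = ‖g s‖ * |φ s| := by rw [norm_mul]; rfl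
      _ ≤ C * |φ s| :=
        mul_le_mul_of_nonneg_right (hC s (Set.Ioo_subset_Icc_self hs)) (abs_nonneg _)

lemma moments_ae_zero {c d : ℝ} {φ : ℝ → ℝ}
    (hIφ : Integrable φ (volume.restrict (Set.Ioo c d)))
    (hmomint : ∀ n : ℕ, Integrable (fun s => φ s * s ^ n) (volume.restrict (Set.Ioo c d)))
    (hmom : ∀ n : ℕ, (∫ s in Set.Ioo c d, φ s * s ^ n) = 0) :
    ∀ᵐ x ∂(volume.restrict (Set.Ioo c d)), φ x = 0 := by
  have hcont : ∀ g : ℝ → ℝ, Continuous g → (∫ s in Set.Ioo c d, g s * φ s) = 0 := by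
    intro g hg
    set I := ∫ s in Set.Ioo c d, g s * φ s with hI
    set B : ℝ := (∫ s in Set.Ioo c d, |φ s|) + 1 with hB
    have hint_abs : (0:ℝ) ≤ ∫ s in Set.Ioo c d, |φ s| := integral_nonneg fun s => abs_nonneg _
    have hB0 : 0 < B := by linarith
    have key : ∀ ε : ℝ, 0 < ε → |I| ≤ ε * B := by
      intro ε hε
      obtain ⟨p, hp⟩ := exists_polynomial_near_of_continuousOn c d g hg.continuousOn ε hε
      have hpol : (∫ s in Set.Ioo c d, Polynomial.eval s p * φ s) = 0 := by
        have h1 : ∀ s : ℝ, Polynomial.eval s p * φ s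
            = ∑ k ∈ Finset.range (p.natDegree + 1), p.coeff k * (φ s * s ^ k) := by
          intro s
          rw [Polynomial.eval_eq_sum_range, Finset.sum_mul]
          exact Finset.sum_congr rfl fun k _ => by ring
        rw [integral_congr_ae (Filter.Eventually.of_forall h1), integral_finset_sum]
        · exact Finset.sum_eq_zero fun k _ => by rw [integral_const_mul, hmom k, mul_zero]
        · exact fun k _ => (hmomint k).const_mul _
      have hdiff : I = ∫ s in Set.Ioo c d, (g s - Polynomial.eval s p) * φ s := by
        have h2 : ∀ s : ℝ, (g s - Polynomial.eval s p) * φ s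
            = g s * φ s - Polynomial.eval s p * φ s := fun s => by ring
        rw [integral_congr_ae (Filter.Eventually.of_forall h2),
          integral_sub (cont_mul_int hIφ hg)
            (cont_mul_int hIφ ((Polynomial.continuous p))), hpol, sub_zero, hI]
      have hbound : ‖∫ s in Set.Ioo c d, (g s - Polynomial.eval s p) * φ s‖
          ≤ ∫ s in Set.Ioo c d, ε * |φ s| := by
        apply norm_integral_le_of_norm_le (hIφ.abs.const_mul ε)
        filter_upwards [ae_restrict_mem measurableSet_Ioo] with s hs
        calc ‖(g s - Polynomial.eval s p) * φ s‖ = |g s - Polynomial.eval s p| * |φ s| := by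
              rw [norm_mul]; rfl
          _ ≤ ε * |φ s| := by
              apply mul_le_mul_of_nonneg_right _ (abs_nonneg _)
              rw [abs_sub_comm]
              exact (hp s (Set.Ioo_subset_Icc_self hs)).le
      rw [integral_const_mul] at hbound
      calc |I| = ‖∫ s in Set.Ioo c d, (g s - Polynomial.eval s p) * φ s‖ := by
            rw [← hdiff]; rfl
        _ ≤ ε * ∫ s in Set.Ioo c d, |φ s| := hbound
        _ ≤ ε * B := by
            apply mul_le_mul_of_nonneg_left _ hε.le
            linarith
    by_contra hne
    have hpos : 0 < |I| := abs_pos.mpr hne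
    have := key (|I| / (2 * B)) (by positivity)
    have heq : |I| / (2 * B) * B = |I| / 2 := by field_simp
    rw [heq] at this
    linarith
  have hloc : LocallyIntegrable φ (volume.restrict (Set.Ioo c d)) :=
    hIφ.locallyIntegrable
  apply ae_eq_zero_of_integral_contDiff_smul_eq_zero hloc
  intro g hgd hgs
  have := hcont g hgd.continuous
  simpa [smul_eq_mul] using this

lemma dPdx_cont_s9 (h : ℝ) (hh : 0 < h) (t : ℝ) : Continuous fun s : ℝ => dPdx h (t - s) := by
  unfold dPdx
  apply Continuous.div (by fun_prop) (by fun_prop)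
  intro s
  positivity

lemma dQdx_cont_s9 (h : ℝ) (hh : 0 < h) (t : ℝ) : Continuous fun s : ℝ => dQdx h (t - s) := by
  unfold dQdx
  apply Continuous.div (by fun_prop) (by fun_prop)
  intro s
  positivity

lemma conv_indicator {c d : ℝ} (φ : ℝ → ℝ) (k : ℝ → ℝ) (t : ℝ) :
    conv k ((Set.Ioo c d).indicator φ) t = ∫ u in Set.Ioo c d, k (t - u) * φ u := by
  unfold conv
  rw [← integral_indicator measurableSet_Ioo]
  congr 1
  funext u
  by_cases hu : u ∈ Set.Ioo c d
  · simp [Set.indicator_of_mem hu]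
  · simp [Set.indicator_of_notMem hu]

lemma CD_line {c d h : ℝ} {φ : ℝ → ℝ} (hh : 0 < h)
    (hIφ : Integrable φ (volume.restrict (Set.Ioo c d))) (t : ℝ)
    (h1 : conv (dPdx h) ((Set.Ioo c d).indicator φ) t = 0)
    (h2 : conv (dQdx h) ((Set.Ioo c d).indicator φ) t = 0) :
    CD c d φ ((t:ℂ) + Complex.I * h) = 0 := by
  have hint1 : Integrable (fun s => dPdx h (t - s) * φ s) (volume.restrict (Set.Ioo c d)) :=
    cont_mul_int hIφ (dPdx_cont_s9 h hh t)
  have hint2 : Integrable (fun s => dQdx h (t - s) * φ s) (volume.restrict (Set.Ioo c d)) :=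
    cont_mul_int hIφ (dQdx_cont_s9 h hh t)
  have hptw : ∀ s : ℝ, (φ s : ℂ) * (((((t:ℂ) + Complex.I * h) - s) ^ 2)⁻¹)
      = (Real.pi * Complex.I) * ((dPdx h (t - s) * φ s : ℝ) : ℂ)
        + (Real.pi * Complex.I * Complex.I) * ((dQdx h (t - s) * φ s : ℝ) : ℂ) := by
    intro s
    have hcast : ((t:ℂ) + Complex.I * h) - s = (((t - s : ℝ)):ℂ) + Complex.I * h := by
      push_cast; ring
    rw [hcast, kernel_id hh (t - s)]
    push_cast
    ring
  have hsplit : CD c d φ ((t:ℂ) + Complex.I * h)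
      = (Real.pi * Complex.I) * ((∫ s in Set.Ioo c d, dPdx h (t - s) * φ s : ℝ) : ℂ)
        + (Real.pi * Complex.I * Complex.I) * ((∫ s in Set.Ioo c d, dQdx h (t - s) * φ s : ℝ) : ℂ) := by
    rw [CD, integral_congr_ae (Filter.Eventually.of_forall hptw), integral_add]
    · rw [integral_const_mul, integral_const_mul]
      congr 1
      · congr 1
        exact integral_ofReal
      · congr 1
        exact integral_ofReal
    · exact (hint1.ofReal).const_mul _
    · exact (hint2.ofReal).const_mul _
  rw [hsplit]
  rw [conv_indicator] at h1 h2
  rw [h1, h2]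
  simp

/-- Injectivity of the adjoint field operator `b₂*`: if `φ ∈ L²(K)` (with `K = (c,d)`,
extended by zero off `K`) satisfies `(∂ₓP_h) ⋆ φ̃ = 0` and `(∂ₓQ_h) ⋆ φ̃ = 0` a.e. on
`S = (a,b)`, then `φ = 0` a.e. on `K`. -/
theorem stmt9 (a b c d h : ℝ) (hab : a < b) (hcd : c < d) (hh : 0 < h)
    (φ : ℝ → ℝ) (hφ : MemLp φ 2 (volume.restrict (Set.Ioo c d)))
    (hz₁ : ∀ᵐ t ∂(volume.restrict (Set.Ioo a b)),
      conv (dPdx h) ((Set.Ioo c d).indicator φ) t = 0)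
    (hz₂ : ∀ᵐ t ∂(volume.restrict (Set.Ioo a b)),
      conv (dQdx h) ((Set.Ioo c d).indicator φ) t = 0) :
    ∀ᵐ x ∂(volume.restrict (Set.Ioo c d)), φ x = 0 := by
  haveI : IsFiniteMeasure (volume.restrict (Set.Ioo c d)) :=
    ⟨by rw [Measure.restrict_apply_univ]; exact measure_Ioo_lt_top⟩
  have hIφ : Integrable φ (volume.restrict (Set.Ioo c d)) := hφ.integrable (by norm_num)
  have hz0 : ∀ᵐ (t : ℝ) ∂(volume.restrict (Set.Ioo a b)),
      CD c d φ ((t:ℂ) + Complex.I * h) = 0 := by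
    filter_upwards [hz₁, hz₂] with t h1 h2
    exact CD_line hh hIφ t h1 h2
  have hCD := CD_eq_zero hab hh hIφ hz0
  have hCT := CT_eq_zero hIφ hCD
  have hmom := real_moments hIφ hCT
  exact moments_ae_zero hIφ (fun n => int_aux_real hIφ n) hmom
end

section
/- Let S and K be nonempty open bounded intervals of ℝ and let h > 0. The field operator b₂ is bounded from L²(S,ℝ²) to L²(K): there exists a constant C > 0 such that for every m = (m₁,m₂) ∈ L²(S,ℝ²), ‖ x ↦ −((∂ₓP_h) ⋆ m̃₁)(x) + ((∂ₓQ_h) ⋆ m̃₂)(x) ‖_{L²(K)} ≤ C ‖m‖_{L²(S,ℝ²)}. -/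
open MeasureTheory
open scoped ENNReal

lemma aux_integrable_inv (h : ℝ) (hh : 0 < h) :
    Integrable (fun x : ℝ => (x ^ 2 + h ^ 2)⁻¹) := by
  have h1 : Integrable (fun x : ℝ => (1 + (x / h) ^ 2)⁻¹) :=
    integrable_inv_one_add_sq.comp_div hh.ne'
  have h2 := h1.const_mul (h ^ 2)⁻¹
  refine h2.congr (Filter.Eventually.of_forall fun x => ?_)
  have hD : (0:ℝ) < x ^ 2 + h ^ 2 := by positivity
  field_simp
  ring

lemma aux_memLp (h : ℝ) (hh : 0 < h) (c : ℝ) (f : ℝ → ℝ) (hf : Continuous f)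
    (hb : ∀ x, |f x| ≤ c / (x ^ 2 + h ^ 2)) : MemLp f 2 volume := by
  rw [memLp_two_iff_integrable_sq hf.aestronglyMeasurable]
  refine ((aux_integrable_inv h hh).const_mul (c ^ 2 / h ^ 2)).mono'
    ((hf.pow 2).aestronglyMeasurable) (Filter.Eventually.of_forall fun x => ?_)
  have hD : (0:ℝ) < x ^ 2 + h ^ 2 := by positivity
  have h1 : f x ^ 2 ≤ (c / (x ^ 2 + h ^ 2)) ^ 2 := by
    rw [← sq_abs]
    exact pow_le_pow_left₀ (abs_nonneg _) (hb x) 2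
  have h2 : (c / (x ^ 2 + h ^ 2)) ^ 2 ≤ c ^ 2 / h ^ 2 * (x ^ 2 + h ^ 2)⁻¹ := by
    rw [div_pow, div_le_iff₀ (by positivity), mul_assoc]
    have : (x ^ 2 + h ^ 2)⁻¹ * (x ^ 2 + h ^ 2) ^ 2 = x ^ 2 + h ^ 2 := by
      field_simp
    rw [this, div_mul_eq_mul_div, le_div_iff₀ (by positivity)]
    nlinarith [sq_nonneg c, sq_nonneg x, sq_nonneg (c * x)]
  calc ‖f x ^ 2‖ = f x ^ 2 := by rw [Real.norm_eq_abs, abs_of_nonneg (sq_nonneg _)]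
    _ ≤ c ^ 2 / h ^ 2 * (x ^ 2 + h ^ 2)⁻¹ := h1.trans h2

lemma dPdx_memLp (h : ℝ) (hh : 0 < h) : MemLp (dPdx h) 2 volume := by
  refine aux_memLp h hh (1 / Real.pi) _ ?_ ?_
  · apply Continuous.div
    · continuity
    · continuity
    · intro x; positivity
  · intro x
    have hD : (0:ℝ) < x ^ 2 + h ^ 2 := by positivity
    have hpi : (0:ℝ) < 1 / Real.pi := by positivity
    unfold dPdx
    rw [abs_div, abs_of_nonneg (by positivity : (0:ℝ) ≤ (x ^ 2 + h ^ 2) ^ 2),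
      div_le_div_iff₀ (by positivity) hD]
    have h1 : |(-(1 / Real.pi) * (2 * x * h))| = (1 / Real.pi) * |2 * x * h| := by
      rw [abs_mul, abs_neg, abs_of_nonneg hpi.le]
    rw [h1]
    have h2 : |2 * x * h| ≤ x ^ 2 + h ^ 2 := by
      rw [abs_le]; constructor <;> nlinarith [sq_nonneg (x + h), sq_nonneg (x - h)]
    calc (1 / Real.pi) * |2 * x * h| * (x ^ 2 + h ^ 2)
        ≤ (1 / Real.pi) * (x ^ 2 + h ^ 2) * (x ^ 2 + h ^ 2) := by
          apply mul_le_mul_of_nonneg_right _ hD.le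
          exact mul_le_mul_of_nonneg_left h2 hpi.le
      _ = 1 / Real.pi * (x ^ 2 + h ^ 2) ^ 2 := by ring

lemma dQdx_memLp (h : ℝ) (hh : 0 < h) : MemLp (dQdx h) 2 volume := by
  refine aux_memLp h hh (1 / Real.pi) _ ?_ ?_
  · apply Continuous.div
    · continuity
    · continuity
    · intro x; positivity
  · intro x
    have hD : (0:ℝ) < x ^ 2 + h ^ 2 := by positivity
    have hpi : (0:ℝ) < 1 / Real.pi := by positivity
    unfold dQdx
    rw [abs_div, abs_of_nonneg (by positivity : (0:ℝ) ≤ (x ^ 2 + h ^ 2) ^ 2),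
      div_le_div_iff₀ (by positivity) hD]
    have h1 : |(1 / Real.pi) * (h ^ 2 - x ^ 2)| = (1 / Real.pi) * |h ^ 2 - x ^ 2| := by
      rw [abs_mul, abs_of_nonneg hpi.le]
    rw [h1]
    have h2 : |h ^ 2 - x ^ 2| ≤ x ^ 2 + h ^ 2 := by
      rw [abs_le]; constructor <;> nlinarith [sq_nonneg x, sq_nonneg h]
    calc (1 / Real.pi) * |h ^ 2 - x ^ 2| * (x ^ 2 + h ^ 2)
        ≤ (1 / Real.pi) * (x ^ 2 + h ^ 2) * (x ^ 2 + h ^ 2) := by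
          apply mul_le_mul_of_nonneg_right _ hD.le
          exact mul_le_mul_of_nonneg_left h2 hpi.le
      _ = 1 / Real.pi * (x ^ 2 + h ^ 2) ^ 2 := by ring

lemma conv_pointwise_bound (k m : ℝ → ℝ) (hk : MemLp k 2 volume) (hm : MemLp m 2 volume)
    (x : ℝ) :
    |conv k m x| ≤ (∫ t, ‖k t‖ ^ (2:ℝ)) ^ (1/2 : ℝ) * (∫ t, ‖m t‖ ^ (2:ℝ)) ^ (1/2 : ℝ) := by
  have hmp : MeasurePreserving (fun t : ℝ => x - t) volume volume :=
    Measure.measurePreserving_sub_left volume x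
  have hkx : MemLp (fun t : ℝ => k (x - t)) 2 volume := hk.comp_measurePreserving hmp
  have hpq : Real.HolderConjugate 2 2 := Real.HolderConjugate.two_two
  have h2 : ENNReal.ofReal (2:ℝ) = 2 := by norm_num
  have holder := integral_mul_norm_le_Lp_mul_Lq (μ := volume) hpq (h2 ▸ hkx) (h2 ▸ hm)
  have hcomp : (∫ t, ‖k (x - t)‖ ^ (2:ℝ)) = ∫ t, ‖k t‖ ^ (2:ℝ) :=
    hmp.integral_comp (MeasurableEquiv.subLeft x).measurableEmbedding
      (fun t => ‖k t‖ ^ (2:ℝ))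
  calc |conv k m x| ≤ ∫ t, ‖k (x - t) * m t‖ := by
        rw [← Real.norm_eq_abs]; exact norm_integral_le_integral_norm _
    _ = ∫ t, ‖k (x - t)‖ * ‖m t‖ := by simp [norm_mul]
    _ ≤ (∫ t, ‖k (x - t)‖ ^ (2:ℝ)) ^ (1/2 : ℝ) * (∫ t, ‖m t‖ ^ (2:ℝ)) ^ (1/2 : ℝ) := holder
    _ = (∫ t, ‖k t‖ ^ (2:ℝ)) ^ (1/2 : ℝ) * (∫ t, ‖m t‖ ^ (2:ℝ)) ^ (1/2 : ℝ) := by rw [hcomp]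

/-- Boundedness of `b₂ : L²(S,ℝ²) → L²(K)`: there is `C > 0` with
`‖b₂[m]‖_{L²(K)} ≤ C ‖m‖_{L²(S,ℝ²)}` for all `m`, where
`‖m‖_{L²(S,ℝ²)} = (‖m₁‖² + ‖m₂‖²)^{1/2}`. Here `S = (a,b)`, `K = (c,d)`. -/
theorem stmt13 (a b c d h : ℝ) (hab : a < b) (hcd : c < d) (hh : 0 < h) :
    ∃ C : ℝ, 0 < C ∧ ∀ m₁ m₂ : ℝ → ℝ, MemLp m₁ 2 volume → MemLp m₂ 2 volume →
      (∀ t ∉ Set.Ioo a b, m₁ t = 0) → (∀ t ∉ Set.Ioo a b, m₂ t = 0) →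
      eLpNorm (fun x => -conv (dPdx h) m₁ x + conv (dQdx h) m₂ x) 2
          (volume.restrict (Set.Ioo c d))
        ≤ ENNReal.ofReal C *
          (((eLpNorm m₁ 2 volume) ^ 2 + (eLpNorm m₂ 2 volume) ^ 2) ^ (1/2 : ℝ)) := by
  have hP := dPdx_memLp h hh
  have hQ := dQdx_memLp h hh
  set CP : ℝ := (∫ t, ‖dPdx h t‖ ^ (2:ℝ)) ^ (1/2 : ℝ) with hCP
  set CQ : ℝ := (∫ t, ‖dQdx h t‖ ^ (2:ℝ)) ^ (1/2 : ℝ) with hCQ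
  have hCPnn : 0 ≤ CP := Real.rpow_nonneg (integral_nonneg fun t => Real.rpow_nonneg (norm_nonneg _) _) _
  have hCQnn : 0 ≤ CQ := Real.rpow_nonneg (integral_nonneg fun t => Real.rpow_nonneg (norm_nonneg _) _) _
  set V : ℝ := (d - c) ^ (1/2 : ℝ) with hV
  have hVnn : 0 ≤ V := Real.rpow_nonneg (by linarith) _
  refine ⟨V * (CP + CQ) + 1, by positivity, fun m₁ m₂ hm₁ hm₂ _ _ => ?_⟩
  set M₁ : ℝ := (∫ t, ‖m₁ t‖ ^ (2:ℝ)) ^ (1/2 : ℝ) with hM₁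
  set M₂ : ℝ := (∫ t, ‖m₂ t‖ ^ (2:ℝ)) ^ (1/2 : ℝ) with hM₂
  have hM₁nn : 0 ≤ M₁ := Real.rpow_nonneg (integral_nonneg fun t => Real.rpow_nonneg (norm_nonneg _) _) _
  have hM₂nn : 0 ≤ M₂ := Real.rpow_nonneg (integral_nonneg fun t => Real.rpow_nonneg (norm_nonneg _) _) _
  -- eLpNorm of mᵢ equals ofReal Mᵢ
  have hsn₁ : eLpNorm m₁ 2 volume = ENNReal.ofReal M₁ := by
    rw [hm₁.eLpNorm_eq_integral_rpow_norm two_ne_zero ENNReal.ofNat_ne_top]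
    norm_num [hM₁]
  have hsn₂ : eLpNorm m₂ 2 volume = ENNReal.ofReal M₂ := by
    rw [hm₂.eLpNorm_eq_integral_rpow_norm two_ne_zero ENNReal.ofNat_ne_top]
    norm_num [hM₂]
  -- pointwise bound
  have hpt : ∀ x : ℝ, ‖-conv (dPdx h) m₁ x + conv (dQdx h) m₂ x‖ ≤ CP * M₁ + CQ * M₂ := by
    intro x
    calc ‖-conv (dPdx h) m₁ x + conv (dQdx h) m₂ x‖
        ≤ ‖-conv (dPdx h) m₁ x‖ + ‖conv (dQdx h) m₂ x‖ := norm_add_le _ _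
      _ = |conv (dPdx h) m₁ x| + |conv (dQdx h) m₂ x| := by
          rw [norm_neg]; rfl
      _ ≤ CP * M₁ + CQ * M₂ :=
          add_le_add (conv_pointwise_bound _ _ hP hm₁ x) (conv_pointwise_bound _ _ hQ hm₂ x)
  -- L² bound on the interval
  have hbound := eLpNorm_le_of_ae_bound (μ := volume.restrict (Set.Ioo c d)) (p := 2)
    (Filter.Eventually.of_forall hpt)
  have hvol : (volume.restrict (Set.Ioo c d)) Set.univ = ENNReal.ofReal (d - c) := by
    rw [Measure.restrict_apply MeasurableSet.univ, Set.univ_inter, Real.volume_Ioo]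
  have htor : ((2 : ℝ≥0∞).toReal)⁻¹ = (1/2 : ℝ) := by norm_num
  refine hbound.trans ?_
  rw [hvol, hsn₁, hsn₂]
  have hrw : ENNReal.ofReal (d - c) ^ ((2 : ℝ≥0∞).toReal)⁻¹ = ENNReal.ofReal V := by
    rw [htor, hV, ← ENNReal.ofReal_rpow_of_nonneg (by linarith) (by norm_num)]
  rw [hrw, ← ENNReal.ofReal_mul hVnn]
  have hre : ((ENNReal.ofReal M₁) ^ 2 + (ENNReal.ofReal M₂) ^ 2) ^ (1/2 : ℝ)
      = ENNReal.ofReal ((M₁ ^ 2 + M₂ ^ 2) ^ (1/2 : ℝ)) := by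
    rw [← ENNReal.ofReal_pow hM₁nn, ← ENNReal.ofReal_pow hM₂nn,
      ← ENNReal.ofReal_add (by positivity) (by positivity),
      ← ENNReal.ofReal_rpow_of_nonneg (by positivity) (by norm_num)]
  rw [hre, ← ENNReal.ofReal_mul (by positivity)]
  apply ENNReal.ofReal_le_ofReal
  set N : ℝ := (M₁ ^ 2 + M₂ ^ 2) ^ (1/2 : ℝ) with hN
  have hNnn : 0 ≤ N := Real.rpow_nonneg (by positivity) _
  have hM₁N : M₁ ≤ N := by
    have : M₁ = (M₁ ^ 2) ^ (1/2 : ℝ) := by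
      rw [← Real.rpow_natCast M₁ 2, ← Real.rpow_mul hM₁nn]
      norm_num
    rw [this, hN]
    exact Real.rpow_le_rpow (by positivity) (by nlinarith [sq_nonneg M₂]) (by norm_num)
  have hM₂N : M₂ ≤ N := by
    have : M₂ = (M₂ ^ 2) ^ (1/2 : ℝ) := by
      rw [← Real.rpow_natCast M₂ 2, ← Real.rpow_mul hM₂nn]
      norm_num
    rw [this, hN]
    exact Real.rpow_le_rpow (by positivity) (by nlinarith [sq_nonneg M₁]) (by norm_num)
  nlinarith [mul_nonneg hVnn hCPnn, mul_nonneg hVnn hCQnn, mul_nonneg (mul_nonneg hVnn hCPnn) hM₁nn]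
end

section
/- Let S and K be nonempty open bounded intervals of ℝ and let h > 0. The field operator b₂ : L²(S,ℝ²) → L²(K) and its adjoint b₂* : L²(K) → L²(S,ℝ²) are compact operators: b₂ maps bounded subsets of L²(S,ℝ²) to relatively compact subsets of L²(K), and b₂* maps bounded subsets of L²(K) to relatively compact subsets of L²(S,ℝ²). -/
open MeasureTheory
open scoped BoundedContinuousFunction ENNReal

lemma myFinite (c d : ℝ) : IsFiniteMeasure (volume.restrict (Set.Ioo c d)) :=
  ⟨by rw [Measure.restrict_apply_univ]; exact measure_Ioo_lt_top⟩

set_option maxHeartbeats 1000000 in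
lemma compact_closure_lemma (c d : ℝ) (hcd : c < d) (M : ℝ)
    (s : Set (Lp ℝ 2 (volume.restrict (Set.Ioo c d))))
    (hs : ∀ f ∈ s, ∃ g : ℝ → ℝ, LipschitzWith M.toNNReal g ∧ (∀ x, |g x| ≤ M) ∧
      (f : ℝ → ℝ) =ᵐ[volume.restrict (Set.Ioo c d)] g) :
    IsCompact (closure s) := by
  haveI := myFinite c d
  set A : Set (Set.Icc c d →ᵇ ℝ) :=
    {u | LipschitzWith M.toNNReal u ∧ ∀ z, u z ∈ Set.Icc (-M) M} with hA
  have hAA : IsCompact (closure A) := by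
    apply BoundedContinuousFunction.arzela_ascoli (Set.Icc (-M) M) isCompact_Icc A
      (fun u z hu => hu.2 z)
    apply Metric.equicontinuous_of_continuity_modulus (fun t => M.toNNReal * t)
    · have : Continuous fun t : ℝ => (M.toNNReal : ℝ) * t := by continuity
      simpa using this.tendsto 0
    · intro x y u
      exact u.2.1.dist_le_mul x y
  let P : C(ℝ, Set.Icc c d) := ⟨fun x => Set.projIcc c d hcd.le x, continuous_projIcc⟩
  let Φ : (Set.Icc c d →ᵇ ℝ) → Lp ℝ 2 (volume.restrict (Set.Ioo c d)) :=
    fun u => (BoundedContinuousFunction.toLp (E := ℝ) 2 (volume.restrict (Set.Ioo c d)) ℝ)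
      (u.compContinuous P)
  have hΦcont : Continuous Φ :=
    (BoundedContinuousFunction.toLp (E := ℝ) 2 (volume.restrict (Set.Ioo c d)) ℝ).continuous.comp
      (BoundedContinuousFunction.continuous_compContinuous P)
  have hC : IsCompact (Φ '' closure A) := hAA.image hΦcont
  have hsub : s ⊆ Φ '' closure A := by
    intro f hf
    obtain ⟨g, hlip, hbd, hae⟩ := hs f hf
    refine ⟨BoundedContinuousFunction.mkOfCompact
      ⟨fun z : Set.Icc c d => g z, hlip.continuous.comp continuous_subtype_val⟩,
      subset_closure ⟨?_, fun z => Set.mem_Icc.2 (abs_le.1 (hbd z))⟩, ?_⟩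
    · have := hlip.comp (LipschitzWith.subtype_val (Set.Icc c d)); rw [mul_one] at this; exact this
    · refine Lp.ext (p := (2:ENNReal)) (μ := volume.restrict (Set.Ioo c d)) ?_
      have h1 := BoundedContinuousFunction.coeFn_toLp (E := ℝ) 2
        (volume.restrict (Set.Ioo c d)) ℝ ((BoundedContinuousFunction.mkOfCompact
        ⟨fun z : Set.Icc c d => g z, hlip.continuous.comp continuous_subtype_val⟩).compContinuous P)
      refine (h1.trans ?_).trans hae.symm
      filter_upwards [ae_restrict_mem measurableSet_Ioo] with x hx
      simp [BoundedContinuousFunction.compContinuous_apply, P,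
        Set.projIcc_of_mem hcd.le (Set.mem_Icc_of_Ioo hx)]
  exact hC.of_isClosed_subset isClosed_closure (closure_minimal hsub hC.isClosed)


lemma abs_div_le' {a b C : ℝ} (hb : 0 < b) (h : |a| ≤ C * b) : |a / b| ≤ C := by
  rw [abs_div, abs_of_pos hb, div_le_iff₀ hb]; exact h

lemma abs_dPdx_le (h : ℝ) (hh : 0 < h) (z : ℝ) : |dPdx h z| ≤ 1 / (Real.pi * h ^ 2) := by
  have hπ : (0:ℝ) < Real.pi := Real.pi_pos
  simp only [dPdx]
  apply abs_div_le' (by positivity)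
  have h1 : |(-(1 / Real.pi) * (2 * z * h))| = 1 / Real.pi * (2 * |z| * h) := by
    rw [abs_mul, abs_neg, abs_of_pos (by positivity : (0:ℝ) < 1 / Real.pi), abs_mul, abs_mul,
      abs_of_pos hh, abs_of_pos (by norm_num : (0:ℝ) < 2)]
  rw [h1, div_mul_eq_mul_div, div_mul_eq_mul_div, one_mul, one_mul,
    div_le_div_iff₀ hπ (by positivity)]
  have hz := abs_nonneg z
  have hz2 : |z| ^ 2 = z ^ 2 := sq_abs z
  have key : 2 * |z| * h * h ^ 2 ≤ (z ^ 2 + h ^ 2) ^ 2 := by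
    nlinarith [sq_nonneg (|z| - h), mul_pos hh hh, sq_nonneg z]
  nlinarith [mul_le_mul_of_nonneg_right key hπ.le]

lemma abs_dQdx_le (h : ℝ) (hh : 0 < h) (z : ℝ) : |dQdx h z| ≤ 1 / (Real.pi * h ^ 2) := by
  have hπ : (0:ℝ) < Real.pi := Real.pi_pos
  simp only [dQdx]
  apply abs_div_le' (by positivity)
  have h1 : |(1 / Real.pi) * (h ^ 2 - z ^ 2)| = 1 / Real.pi * |h ^ 2 - z ^ 2| := by
    rw [abs_mul, abs_of_pos (by positivity : (0:ℝ) < 1 / Real.pi)]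
  have h2 : |h ^ 2 - z ^ 2| ≤ z ^ 2 + h ^ 2 := abs_le.2 ⟨by nlinarith [sq_nonneg z, sq_nonneg h],
    by nlinarith [sq_nonneg z, sq_nonneg h]⟩
  rw [h1]
  calc 1 / Real.pi * |h ^ 2 - z ^ 2| ≤ 1 / Real.pi * (z ^ 2 + h ^ 2) := by
        apply mul_le_mul_of_nonneg_left h2 (by positivity)
    _ ≤ 1 / (Real.pi * h ^ 2) * (z ^ 2 + h ^ 2) ^ 2 := by
        rw [div_mul_eq_mul_div, div_mul_eq_mul_div, one_mul, one_mul,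
          div_le_div_iff₀ hπ (by positivity)]
        have key : (z ^ 2 + h ^ 2) * h ^ 2 ≤ (z ^ 2 + h ^ 2) ^ 2 := by
          nlinarith [mul_nonneg (add_nonneg (sq_nonneg z) (sq_nonneg h)) (sq_nonneg z)]
        nlinarith [mul_le_mul_of_nonneg_right key hπ.le]

lemma hasDerivAt_num_dPdx (h x : ℝ) :
    HasDerivAt (fun x : ℝ => -(1 / Real.pi) * (2 * x * h)) (-(1 / Real.pi) * (2 * h)) x := by
  have h0 : HasDerivAt (fun x : ℝ => 2 * x * h) (2 * h) x := by
    simpa using ((hasDerivAt_id x).const_mul 2).mul_const h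
  simpa using h0.const_mul (-(1 / Real.pi))

lemma hasDerivAt_den (h x : ℝ) :
    HasDerivAt (fun x : ℝ => (x ^ 2 + h ^ 2) ^ 2) (2 * (x ^ 2 + h ^ 2) * (2 * x)) x := by
  have h1 : HasDerivAt (fun x : ℝ => x ^ 2 + h ^ 2) (2 * x) x := by
    simpa using (hasDerivAt_pow 2 x).add_const (h ^ 2)
  have := h1.fun_pow 2
  simpa [mul_comm, mul_assoc, mul_left_comm] using this

lemma hasDerivAt_dPdx' (h : ℝ) (hh : 0 < h) (x : ℝ) :
    HasDerivAt (dPdx h)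
      ((-(1 / Real.pi) * (2 * h) * (x ^ 2 + h ^ 2) ^ 2 - -(1 / Real.pi) * (2 * x * h) *
        (2 * (x ^ 2 + h ^ 2) * (2 * x))) / ((x ^ 2 + h ^ 2) ^ 2) ^ 2) x := by
  have heq : dPdx h = fun x : ℝ => -(1 / Real.pi) * (2 * x * h) / (x ^ 2 + h ^ 2) ^ 2 := by
    funext x; simp only [dPdx]
  rw [heq]
  exact (hasDerivAt_num_dPdx h x).div (hasDerivAt_den h x) (by positivity)

lemma hasDerivAt_num_dQdx (h x : ℝ) :
    HasDerivAt (fun x : ℝ => 1 / Real.pi * (h ^ 2 - x ^ 2)) (1 / Real.pi * (-(2 * x))) x := by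
  have h0 : HasDerivAt (fun x : ℝ => h ^ 2 - x ^ 2) (-(2 * x)) x := by
    simpa using ((hasDerivAt_pow 2 x).const_sub (h ^ 2))
  simpa using h0.const_mul (1 / Real.pi)

lemma hasDerivAt_dQdx' (h : ℝ) (hh : 0 < h) (x : ℝ) :
    HasDerivAt (dQdx h)
      ((1 / Real.pi * (-(2 * x)) * (x ^ 2 + h ^ 2) ^ 2 - 1 / Real.pi * (h ^ 2 - x ^ 2) *
        (2 * (x ^ 2 + h ^ 2) * (2 * x))) / ((x ^ 2 + h ^ 2) ^ 2) ^ 2) x := by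
  have heq : dQdx h = fun x : ℝ => 1 / Real.pi * (h ^ 2 - x ^ 2) / (x ^ 2 + h ^ 2) ^ 2 := by
    funext x; simp only [dQdx]
  rw [heq]
  exact (hasDerivAt_num_dQdx h x).div (hasDerivAt_den h x) (by positivity)

lemma lipschitz_dPdx (h : ℝ) (hh : 0 < h) :
    LipschitzWith (6 / (Real.pi * h ^ 3)).toNNReal (dPdx h) := by
  have hπ : (0:ℝ) < Real.pi := Real.pi_pos
  apply lipschitzWith_of_nnnorm_deriv_le (fun x => (hasDerivAt_dPdx' h hh x).differentiableAt)
  intro x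
  rw [(hasDerivAt_dPdx' h hh x).deriv, ← NNReal.coe_le_coe, coe_nnnorm, Real.norm_eq_abs,
    Real.coe_toNNReal _ (by positivity)]
  apply abs_div_le' (by positivity)
  have hfac : -(1 / Real.pi) * (2 * h) * (x ^ 2 + h ^ 2) ^ 2 - -(1 / Real.pi) * (2 * x * h) *
      (2 * (x ^ 2 + h ^ 2) * (2 * x)) =
      2 * h / Real.pi * ((x ^ 2 + h ^ 2) * (3 * x ^ 2 - h ^ 2)) := by
    field_simp; ring
  rw [hfac, abs_mul, abs_mul, abs_of_pos (by positivity : (0:ℝ) < 2 * h / Real.pi),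
    abs_of_pos (by positivity : (0:ℝ) < x ^ 2 + h ^ 2)]
  have h2 : |3 * x ^ 2 - h ^ 2| ≤ 3 * (x ^ 2 + h ^ 2) :=
    abs_le.2 ⟨by nlinarith [sq_nonneg x, sq_nonneg h], by nlinarith [sq_nonneg x, sq_nonneg h]⟩
  have key : 2 * h * ((x ^ 2 + h ^ 2) * (3 * (x ^ 2 + h ^ 2))) * h ^ 3 ≤
      6 * ((x ^ 2 + h ^ 2) ^ 2) ^ 2 := by
    nlinarith [sq_nonneg x, mul_pos hh hh, sq_nonneg (x ^ 2 + h ^ 2),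
      mul_le_mul_of_nonneg_left (show h ^ 2 ≤ x ^ 2 + h ^ 2 by nlinarith [sq_nonneg x])
        (show (0:ℝ) ≤ 2 * h * (x ^ 2 + h ^ 2) * h by positivity),
      mul_le_mul_of_nonneg_right (show h ^ 2 ≤ x ^ 2 + h ^ 2 by nlinarith [sq_nonneg x])
        (show (0:ℝ) ≤ (x ^ 2 + h ^ 2) ^ 2 by positivity)]
  have step : 2 * h / Real.pi * ((x ^ 2 + h ^ 2) * |3 * x ^ 2 - h ^ 2|) ≤
      2 * h / Real.pi * ((x ^ 2 + h ^ 2) * (3 * (x ^ 2 + h ^ 2))) := by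
    apply mul_le_mul_of_nonneg_left _ (by positivity)
    exact mul_le_mul_of_nonneg_left h2 (by positivity)
  refine step.trans ?_
  rw [div_mul_eq_mul_div, div_mul_eq_mul_div, div_le_div_iff₀ hπ (by positivity)]
  nlinarith [mul_le_mul_of_nonneg_right key hπ.le]

lemma lipschitz_dQdx (h : ℝ) (hh : 0 < h) :
    LipschitzWith (6 / (Real.pi * h ^ 3)).toNNReal (dQdx h) := by
  have hπ : (0:ℝ) < Real.pi := Real.pi_pos
  apply lipschitzWith_of_nnnorm_deriv_le (fun x => (hasDerivAt_dQdx' h hh x).differentiableAt)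
  intro x
  rw [(hasDerivAt_dQdx' h hh x).deriv, ← NNReal.coe_le_coe, coe_nnnorm, Real.norm_eq_abs,
    Real.coe_toNNReal _ (by positivity)]
  apply abs_div_le' (by positivity)
  have hfac : 1 / Real.pi * (-(2 * x)) * (x ^ 2 + h ^ 2) ^ 2 - 1 / Real.pi * (h ^ 2 - x ^ 2) *
      (2 * (x ^ 2 + h ^ 2) * (2 * x)) =
      2 / Real.pi * ((x ^ 2 + h ^ 2) * (-x * (3 * h ^ 2 - x ^ 2))) := by
    field_simp; ring
  rw [hfac, abs_mul, abs_mul, abs_mul,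
    abs_of_pos (by positivity : (0:ℝ) < 2 / Real.pi),
    abs_of_pos (by positivity : (0:ℝ) < x ^ 2 + h ^ 2), abs_neg]
  have h2 : |3 * h ^ 2 - x ^ 2| ≤ 3 * (x ^ 2 + h ^ 2) :=
    abs_le.2 ⟨by nlinarith [sq_nonneg x, sq_nonneg h], by nlinarith [sq_nonneg x, sq_nonneg h]⟩
  have a1 : 2 * |x| * h ≤ x ^ 2 + h ^ 2 := by
    nlinarith [sq_nonneg (|x| - h), sq_abs x, abs_nonneg x]
  have a3 : 2 * |x| * h * h ^ 2 ≤ (x ^ 2 + h ^ 2) * (x ^ 2 + h ^ 2) :=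
    mul_le_mul a1 (by nlinarith [sq_nonneg x]) (by positivity) (by positivity)
  have key : 2 * |x| * ((x ^ 2 + h ^ 2) * (3 * (x ^ 2 + h ^ 2))) * h ^ 3 ≤
      6 * ((x ^ 2 + h ^ 2) ^ 2) ^ 2 := by
    nlinarith [mul_le_mul_of_nonneg_left a3
      (show (0:ℝ) ≤ 3 * (x ^ 2 + h ^ 2) ^ 2 by positivity),
      sq_nonneg ((x ^ 2 + h ^ 2) ^ 2)]
  have step : 2 / Real.pi * ((x ^ 2 + h ^ 2) * (|x| * |3 * h ^ 2 - x ^ 2|)) ≤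
      2 / Real.pi * ((x ^ 2 + h ^ 2) * (|x| * (3 * (x ^ 2 + h ^ 2)))) := by
    apply mul_le_mul_of_nonneg_left _ (by positivity)
    apply mul_le_mul_of_nonneg_left _ (by positivity)
    exact mul_le_mul_of_nonneg_left h2 (abs_nonneg x)
  refine step.trans ?_
  rw [div_mul_eq_mul_div, div_mul_eq_mul_div, div_le_div_iff₀ hπ (by positivity)]
  nlinarith [mul_le_mul_of_nonneg_right key hπ.le]


lemma conv_integrand_integrable {k g : ℝ → ℝ} {C0 : ℝ} (hkc : Continuous k)
    (hkb : ∀ z, |k z| ≤ C0) (hg : Integrable g) (x : ℝ) :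
    Integrable (fun t => k (x - t) * g t) := by
  apply hg.bdd_mul ((hkc.comp (continuous_const.sub continuous_id)).aestronglyMeasurable)
  exact Filter.Eventually.of_forall fun t => by simpa [Real.norm_eq_abs] using hkb (x - t)

lemma abs_conv_le {k g : ℝ → ℝ} {C0 : ℝ} (hkb : ∀ z, |k z| ≤ C0)
    (hg : Integrable g) (x : ℝ) :
    |conv k g x| ≤ C0 * ∫ t, |g t| := by
  have h0 : C0 * ∫ t, |g t| = ∫ t, C0 * |g t| := by
    rw [integral_const_mul]
  rw [conv, h0]
  have hC0 : 0 ≤ C0 := le_trans (abs_nonneg _) (hkb 0)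
  rw [← Real.norm_eq_abs]
  apply norm_integral_le_of_norm_le (hg.abs.const_mul C0)
  filter_upwards with t
  rw [Real.norm_eq_abs, abs_mul]
  exact mul_le_mul_of_nonneg_right (hkb _) (abs_nonneg _)

lemma lipschitz_conv {k g : ℝ → ℝ} {C0 L : ℝ} (hL : 0 ≤ L) (hkc : Continuous k)
    (hkb : ∀ z, |k z| ≤ C0) (hkl : LipschitzWith L.toNNReal k) (hg : Integrable g) :
    LipschitzWith (L * ∫ t, |g t|).toNNReal (conv k g) := by
  have hI : 0 ≤ ∫ t, |g t| := integral_nonneg fun t => abs_nonneg _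
  apply LipschitzWith.of_dist_le_mul
  intro x y
  rw [Real.coe_toNNReal _ (mul_nonneg hL hI), Real.dist_eq, Real.dist_eq]
  have hix := conv_integrand_integrable hkc hkb hg x
  have hiy := conv_integrand_integrable hkc hkb hg y
  have hsub : conv k g x - conv k g y = ∫ t, (k (x - t) * g t - k (y - t) * g t) := by
    rw [conv, conv, integral_sub hix hiy]
  rw [hsub]
  have hdom : Integrable (fun t => L * |x - y| * |g t|) := hg.abs.const_mul _
  calc |∫ t, (k (x - t) * g t - k (y - t) * g t)|
      ≤ ∫ t, L * |x - y| * |g t| := by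
        rw [← Real.norm_eq_abs]
        apply norm_integral_le_of_norm_le hdom
        filter_upwards with t
        rw [Real.norm_eq_abs, ← sub_mul, abs_mul]
        apply mul_le_mul_of_nonneg_right _ (abs_nonneg _)
        have := hkl.dist_le_mul (x - t) (y - t)
        rw [Real.dist_eq, Real.dist_eq, Real.coe_toNNReal _ hL] at this
        simpa [sub_sub_sub_cancel_right] using this
    _ = L * (∫ t, |g t|) * |x - y| := by rw [integral_const_mul]; ring



lemma indicator_integrable (a b : ℝ) (u : Lp ℝ 2 (volume.restrict (Set.Ioo a b))) :
    Integrable ((Set.Ioo a b).indicator (⇑u)) := by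
  haveI := myFinite a b
  rw [integrable_indicator_iff measurableSet_Ioo]
  exact (Lp.memLp u).integrable one_le_two

lemma integral_abs_indicator_le (a b : ℝ) (u : Lp ℝ 2 (volume.restrict (Set.Ioo a b))) :
    ∫ t, |(Set.Ioo a b).indicator (⇑u) t| ≤
      ‖u‖ * (volume (Set.Ioo a b) ^ (1 / (1 : ℝ≥0∞).toReal - 1 / (2 : ℝ≥0∞).toReal)).toReal := by
  haveI := myFinite a b
  have hu2 : MemLp (⇑u) 2 (volume.restrict (Set.Ioo a b)) := Lp.memLp u
  have hui : Integrable (⇑u) (volume.restrict (Set.Ioo a b)) := hu2.integrable one_le_two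
  have habs : (fun t => |(Set.Ioo a b).indicator (⇑u) t|) =
      (Set.Ioo a b).indicator (fun t => |u t|) := by
    funext t
    simp [Set.indicator_apply, apply_ite (fun r : ℝ => |r|)]
  have hind : ∫ t, |(Set.Ioo a b).indicator (⇑u) t| = ∫ t, |u t| ∂(volume.restrict (Set.Ioo a b)) := by
    rw [habs, integral_indicator measurableSet_Ioo]
  rw [hind]
  have h1 : ENNReal.ofReal (∫ t, |u t| ∂(volume.restrict (Set.Ioo a b))) = eLpNorm (⇑u) 1 (volume.restrict (Set.Ioo a b)) := by
    rw [eLpNorm_one_eq_lintegral_enorm, ← ofReal_integral_norm_eq_lintegral_enorm hui]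
    simp [Real.norm_eq_abs]
  have h2 : eLpNorm (⇑u) 1 (volume.restrict (Set.Ioo a b)) ≤ eLpNorm (⇑u) 2 (volume.restrict (Set.Ioo a b)) *
      (volume.restrict (Set.Ioo a b)) Set.univ ^ (1 / (1 : ℝ≥0∞).toReal - 1 / (2 : ℝ≥0∞).toReal) :=
    eLpNorm_le_eLpNorm_mul_rpow_measure_univ (by norm_num) hu2.aestronglyMeasurable
  have hsnt : eLpNorm (⇑u) 2 (volume.restrict (Set.Ioo a b)) ≠ ⊤ := Lp.eLpNorm_ne_top u
  have hμu : (volume.restrict (Set.Ioo a b)) Set.univ = volume (Set.Ioo a b) := Measure.restrict_apply_univ _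
  have hrne : (volume.restrict (Set.Ioo a b)) Set.univ ^ (1 / (1 : ℝ≥0∞).toReal - 1 / (2 : ℝ≥0∞).toReal) ≠ ⊤ := by
    apply ENNReal.rpow_ne_top_of_nonneg (by norm_num)
    rw [hμu]; exact measure_Ioo_lt_top.ne
  have h3 : ∫ t, |u t| ∂(volume.restrict (Set.Ioo a b)) =
      (ENNReal.ofReal (∫ t, |u t| ∂(volume.restrict (Set.Ioo a b)))).toReal := by
    rw [ENNReal.toReal_ofReal (integral_nonneg fun t => abs_nonneg _)]
  rw [h3, h1]
  calc (eLpNorm (⇑u) 1 (volume.restrict (Set.Ioo a b))).toReal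
      ≤ (eLpNorm (⇑u) 2 (volume.restrict (Set.Ioo a b)) *
        (volume.restrict (Set.Ioo a b)) Set.univ ^ (1 / (1 : ℝ≥0∞).toReal - 1 / (2 : ℝ≥0∞).toReal)).toReal :=
        ENNReal.toReal_mono (ENNReal.mul_ne_top hsnt hrne) h2
    _ = ‖u‖ * (volume (Set.Ioo a b) ^ (1 / (1 : ℝ≥0∞).toReal - 1 / (2 : ℝ≥0∞).toReal)).toReal := by
        rw [ENNReal.toReal_mul, Lp.norm_def, hμu]

section Main

lemma conv_set_compact (a b c d h : ℝ) (hab : a < b) (hcd : c < d) (hh : 0 < h)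
    {k : ℝ → ℝ} (hkc : Continuous k) (hkb : ∀ z, |k z| ≤ 1 / (Real.pi * h ^ 2))
    (hkl : LipschitzWith (6 / (Real.pi * h ^ 3)).toNNReal k)
    (A : Set (Lp ℝ 2 (volume.restrict (Set.Ioo c d)))) (hA : Bornology.IsBounded A) :
    IsCompact (closure {q : Lp ℝ 2 (volume.restrict (Set.Ioo a b)) | ∃ φ ∈ A,
      (q : ℝ → ℝ) =ᵐ[volume.restrict (Set.Ioo a b)] conv k ((Set.Ioo c d).indicator ⇑φ)}) := by
  have hπ : (0:ℝ) < Real.pi := Real.pi_pos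
  obtain ⟨R, hR⟩ := hA.exists_norm_le
  set C0 : ℝ := 1 / (Real.pi * h ^ 2) with hC0def
  set L : ℝ := 6 / (Real.pi * h ^ 3) with hLdef
  have hC0 : 0 ≤ C0 := by positivity
  have hL : 0 ≤ L := by positivity
  set Ccd : ℝ :=
    (volume (Set.Ioo c d) ^ (1 / (1 : ℝ≥0∞).toReal - 1 / (2 : ℝ≥0∞).toReal)).toReal with hCcddef
  have hCcd : 0 ≤ Ccd := ENNReal.toReal_nonneg
  set R' : ℝ := max R 0 with hR'def
  have hR' : 0 ≤ R' := le_max_right _ _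
  set M : ℝ := (C0 + L) * (R' * Ccd) with hMdef
  have hM : 0 ≤ M := by positivity
  apply compact_closure_lemma a b hab M
  intro f hf
  obtain ⟨φ, hφA, hae⟩ := hf
  have hint : Integrable ((Set.Ioo c d).indicator ⇑φ) := indicator_integrable c d φ
  set I : ℝ := ∫ t, |(Set.Ioo c d).indicator (⇑φ) t| with hIdef
  have hInn : 0 ≤ I := integral_nonneg fun t => abs_nonneg _
  have hIle : I ≤ R' * Ccd := by
    refine (integral_abs_indicator_le c d φ).trans ?_
    exact mul_le_mul_of_nonneg_right ((hR φ hφA).trans (le_max_left _ _)) hCcd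
  have hlip : LipschitzWith (L * I).toNNReal (conv k ((Set.Ioo c d).indicator ⇑φ)) :=
    lipschitz_conv hL hkc hkb hkl hint
  refine ⟨conv k ((Set.Ioo c d).indicator ⇑φ), ?_, ?_, hae⟩
  · refine hlip.weaken ?_
    rw [← NNReal.coe_le_coe, Real.coe_toNNReal _ (mul_nonneg hL hInn), Real.coe_toNNReal _ hM]
    nlinarith [mul_le_mul_of_nonneg_left hIle hL, mul_nonneg hC0 (mul_nonneg hR' hCcd)]
  · intro x
    refine (abs_conv_le hkb hint x).trans ?_
    nlinarith [mul_le_mul_of_nonneg_left hIle hC0, mul_nonneg hL (mul_nonneg hR' hCcd)]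

/-- Compactness of `b₂ : L²(S,ℝ²) → L²(K)` and of `b₂* : L²(K) → L²(S,ℝ²)`: each maps
bounded sets to relatively compact sets. `L²(S,ℝ²)` is identified with
`L²(S) × L²(S)`; here `S = (a,b)`, `K = (c,d)`. -/
theorem stmt14 (a b c d h : ℝ) (hab : a < b) (hcd : c < d) (hh : 0 < h) :
    let S := Set.Ioo a b
    let K := Set.Ioo c d
    (∀ A : Set (Lp ℝ 2 (volume.restrict S) × Lp ℝ 2 (volume.restrict S)),
      Bornology.IsBounded A →
      IsCompact (closure {f : Lp ℝ 2 (volume.restrict K) | ∃ p ∈ A,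
        (f : ℝ → ℝ) =ᵐ[volume.restrict K]
          fun x => -conv (dPdx h) (S.indicator ⇑p.1) x + conv (dQdx h) (S.indicator ⇑p.2) x})) ∧
    (∀ A : Set (Lp ℝ 2 (volume.restrict K)), Bornology.IsBounded A →
      IsCompact (closure {q : Lp ℝ 2 (volume.restrict S) × Lp ℝ 2 (volume.restrict S) |
        ∃ φ ∈ A,
        (q.1 : ℝ → ℝ) =ᵐ[volume.restrict S] conv (dPdx h) (K.indicator ⇑φ) ∧
        (q.2 : ℝ → ℝ) =ᵐ[volume.restrict S] conv (dQdx h) (K.indicator ⇑φ)})) := by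
  intro S K
  have hπ : (0:ℝ) < Real.pi := Real.pi_pos
  have hPc : Continuous (dPdx h) := (lipschitz_dPdx h hh).continuous
  have hQc : Continuous (dQdx h) := (lipschitz_dQdx h hh).continuous
  constructor
  · intro A hA
    obtain ⟨R, hR⟩ := hA.exists_norm_le
    set C0 : ℝ := 1 / (Real.pi * h ^ 2) with hC0def
    set L : ℝ := 6 / (Real.pi * h ^ 3) with hLdef
    have hC0 : 0 ≤ C0 := by positivity
    have hL : 0 ≤ L := by positivity
    set Cab : ℝ :=
      (volume (Set.Ioo a b) ^ (1 / (1 : ℝ≥0∞).toReal - 1 / (2 : ℝ≥0∞).toReal)).toReal with hCabdef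
    have hCab : 0 ≤ Cab := ENNReal.toReal_nonneg
    set R' : ℝ := max R 0 with hR'def
    have hR' : 0 ≤ R' := le_max_right _ _
    set M : ℝ := 2 * (C0 + L) * (R' * Cab) with hMdef
    have hM : 0 ≤ M := by positivity
    apply compact_closure_lemma c d hcd M
    intro f hf
    obtain ⟨p, hpA, hae⟩ := hf
    have hint1 : Integrable ((Set.Ioo a b).indicator ⇑p.1) := indicator_integrable a b p.1
    have hint2 : Integrable ((Set.Ioo a b).indicator ⇑p.2) := indicator_integrable a b p.2
    set I1 : ℝ := ∫ t, |(Set.Ioo a b).indicator (⇑p.1) t| with hI1def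
    set I2 : ℝ := ∫ t, |(Set.Ioo a b).indicator (⇑p.2) t| with hI2def
    have hI1nn : 0 ≤ I1 := integral_nonneg fun t => abs_nonneg _
    have hI2nn : 0 ≤ I2 := integral_nonneg fun t => abs_nonneg _
    have hnp1 : ‖p.1‖ ≤ R' := (norm_fst_le p).trans ((hR p hpA).trans (le_max_left _ _))
    have hnp2 : ‖p.2‖ ≤ R' := (norm_snd_le p).trans ((hR p hpA).trans (le_max_left _ _))
    have hI1le : I1 ≤ R' * Cab :=
      (integral_abs_indicator_le a b p.1).trans (mul_le_mul_of_nonneg_right hnp1 hCab)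
    have hI2le : I2 ≤ R' * Cab :=
      (integral_abs_indicator_le a b p.2).trans (mul_le_mul_of_nonneg_right hnp2 hCab)
    have hlip1 : LipschitzWith (L * I1).toNNReal (conv (dPdx h) ((Set.Ioo a b).indicator ⇑p.1)) :=
      lipschitz_conv hL hPc (abs_dPdx_le h hh) (lipschitz_dPdx h hh) hint1
    have hlip2 : LipschitzWith (L * I2).toNNReal (conv (dQdx h) ((Set.Ioo a b).indicator ⇑p.2)) :=
      lipschitz_conv hL hQc (abs_dQdx_le h hh) (lipschitz_dQdx h hh) hint2
    refine ⟨fun x => -conv (dPdx h) ((Set.Ioo a b).indicator ⇑p.1) x +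
        conv (dQdx h) ((Set.Ioo a b).indicator ⇑p.2) x, ?_, ?_, hae⟩
    · refine (hlip1.neg.add hlip2).weaken ?_
      rw [← NNReal.coe_le_coe]
      push_cast
      rw [Real.coe_toNNReal _ (mul_nonneg hL hI1nn), Real.coe_toNNReal _ (mul_nonneg hL hI2nn),
        Real.coe_toNNReal _ hM]
      nlinarith [mul_le_mul_of_nonneg_left hI1le hL, mul_le_mul_of_nonneg_left hI2le hL,
        mul_nonneg hC0 (mul_nonneg hR' hCab)]
    · intro x
      have habs : |(fun x => -conv (dPdx h) ((Set.Ioo a b).indicator ⇑p.1) x +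
          conv (dQdx h) ((Set.Ioo a b).indicator ⇑p.2) x) x| ≤
          |conv (dPdx h) ((Set.Ioo a b).indicator ⇑p.1) x| +
          |conv (dQdx h) ((Set.Ioo a b).indicator ⇑p.2) x| := by
        have := abs_add_le (-conv (dPdx h) ((Set.Ioo a b).indicator ⇑p.1) x)
          (conv (dQdx h) ((Set.Ioo a b).indicator ⇑p.2) x)
        rwa [abs_neg] at this
      refine habs.trans ?_
      have hb1 := abs_conv_le (abs_dPdx_le h hh) hint1 x
      have hb2 := abs_conv_le (abs_dQdx_le h hh) hint2 x
      nlinarith [mul_le_mul_of_nonneg_left hI1le hC0, mul_le_mul_of_nonneg_left hI2le hC0,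
        mul_nonneg hL (mul_nonneg hR' hCab)]
  · intro A hA
    have hc1 := conv_set_compact a b c d h hab hcd hh hPc (abs_dPdx_le h hh)
      (lipschitz_dPdx h hh) A hA
    have hc2 := conv_set_compact a b c d h hab hcd hh hQc (abs_dQdx_le h hh)
      (lipschitz_dQdx h hh) A hA
    have hsub : {q : Lp ℝ 2 (volume.restrict S) × Lp ℝ 2 (volume.restrict S) |
        ∃ φ ∈ A,
        (q.1 : ℝ → ℝ) =ᵐ[volume.restrict S] conv (dPdx h) (K.indicator ⇑φ) ∧
        (q.2 : ℝ → ℝ) =ᵐ[volume.restrict S] conv (dQdx h) (K.indicator ⇑φ)} ⊆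
        (closure {q : Lp ℝ 2 (volume.restrict (Set.Ioo a b)) | ∃ φ ∈ A,
          (q : ℝ → ℝ) =ᵐ[volume.restrict (Set.Ioo a b)]
            conv (dPdx h) ((Set.Ioo c d).indicator ⇑φ)}) ×ˢ
        (closure {q : Lp ℝ 2 (volume.restrict (Set.Ioo a b)) | ∃ φ ∈ A,
          (q : ℝ → ℝ) =ᵐ[volume.restrict (Set.Ioo a b)]
            conv (dQdx h) ((Set.Ioo c d).indicator ⇑φ)}) := by
      rintro q ⟨φ, hφA, h1, h2⟩
      exact ⟨subset_closure ⟨φ, hφA, h1⟩, subset_closure ⟨φ, hφA, h2⟩⟩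
    exact (hc1.prod hc2).of_isClosed_subset isClosed_closure
      (closure_minimal hsub (isClosed_closure.prod isClosed_closure))

end Main
end

section
/- Let S and K be nonempty open bounded intervals of ℝ and let h > 0. Neither of the two moment-estimation targets e₁ = (χ_S, 0) nor e₂ = (0, χ_S) belongs to the range of the adjoint field operator b₂*: there is no φ ∈ L²(K) with ((∂ₓP_h) ⋆ φ̃)(t) = 1 and ((∂ₓQ_h) ⋆ φ̃)(t) = 0 for almost every t ∈ S, and there is no φ ∈ L²(K) with ((∂ₓP_h) ⋆ φ̃)(t) = 0 and ((∂ₓQ_h) ⋆ φ̃)(t) = 1 for almost every t ∈ S. -/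
open MeasureTheory

open Complex Filter Metric Topology

lemma integral_complex_ofReal' {f : ℝ → ℝ} :
    (∫ x : ℝ, ((f x : ℝ) : ℂ)) = (((∫ x : ℝ, f x) : ℝ) : ℂ) := integral_ofReal


lemma kernel_eq (h : ℝ) (hh : 0 < h) (x : ℝ) :
    ((dPdx h x : ℂ) + I * (dQdx h x : ℂ)) = -(I / Real.pi) * (((x : ℂ) + I * h) ^ 2)⁻¹ := by
  have hπ : (Real.pi : ℂ) ≠ 0 := by simpa using Real.pi_ne_zero
  have hD : ((x : ℝ) ^ 2 + h ^ 2) ≠ 0 := by positivity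
  have hDc : ((x : ℂ) ^ 2 + (h : ℂ) ^ 2) ≠ 0 := by
    have : (((x : ℝ) ^ 2 + h ^ 2 : ℝ) : ℂ) ≠ 0 := by exact_mod_cast hD
    push_cast at this; exact this
  have hW : ((x : ℂ) + I * h) ≠ 0 := by
    intro h0
    have : ((x : ℂ) + I * h).im = 0 := by rw [h0]; simp
    simp at this
    linarith
  unfold dPdx dQdx
  push_cast
  rw [eq_comm, neg_mul, neg_eq_iff_eq_neg, mul_inv_eq_iff_eq_mul₀ (pow_ne_zero 2 hW)]
  field_simp
  have hI3 : (I:ℂ)^3 = -I := by rw [pow_succ, Complex.I_sq]; ring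
  ring_nf
  simp only [hI3, Complex.I_sq]
  ring

lemma kernel_bdd_P (h : ℝ) (hh : 0 < h) (x : ℝ) : |dPdx h x| ≤ 1 / (Real.pi * h ^ 2) := by
  have hπ := Real.pi_pos
  have hD : (0:ℝ) < x ^ 2 + h ^ 2 := by positivity
  unfold dPdx
  rw [abs_div, abs_of_pos (by positivity : (0:ℝ) < (x^2+h^2)^2)]
  rw [div_le_div_iff₀ (by positivity) (by positivity)]
  have habs : |(-(1 / Real.pi) * (2 * x * h))| = (1/Real.pi) * (2 * |x| * h) := by
    rw [abs_mul, abs_neg, abs_of_pos (by positivity : (0:ℝ) < 1/Real.pi)]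
    rw [abs_mul, abs_mul, abs_of_pos (by norm_num : (0:ℝ) < 2), abs_of_pos hh]
  rw [habs]
  have h1 : 2 * |x| * h ≤ x^2 + h^2 := by nlinarith [_root_.sq_abs x, abs_nonneg x, sq_nonneg (|x| - h)]
  have h2 : (1/Real.pi) * (2 * |x| * h) * (Real.pi * h^2) = (2 * |x| * h) * h^2 := by
    field_simp
  rw [h2]
  nlinarith [sq_nonneg x, _root_.sq_abs x, abs_nonneg x]

lemma kernel_bdd_Q (h : ℝ) (hh : 0 < h) (x : ℝ) : |dQdx h x| ≤ 1 / (Real.pi * h ^ 2) := by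
  have hπ := Real.pi_pos
  have hD : (0:ℝ) < x ^ 2 + h ^ 2 := by positivity
  unfold dQdx
  rw [abs_div, abs_of_pos (by positivity : (0:ℝ) < (x^2+h^2)^2)]
  rw [div_le_div_iff₀ (by positivity) (by positivity)]
  have habs : |(1 / Real.pi) * (h ^ 2 - x ^ 2)| ≤ (1/Real.pi) * (x^2 + h^2) := by
    rw [abs_mul, abs_of_pos (by positivity : (0:ℝ) < 1/Real.pi)]
    have : |h^2 - x^2| ≤ x^2 + h^2 := by
      rw [abs_le]; constructor <;> nlinarith [sq_nonneg x, sq_nonneg h]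
    exact mul_le_mul_of_nonneg_left this (by positivity)
  calc |(1 / Real.pi) * (h ^ 2 - x ^ 2)| * (Real.pi * h ^ 2)
      ≤ ((1/Real.pi) * (x^2 + h^2)) * (Real.pi * h^2) := by
        apply mul_le_mul_of_nonneg_right habs (by positivity)
    _ = (x^2+h^2) * h^2 := by field_simp
    _ ≤ 1 * (x^2+h^2)^2 := by nlinarith [sq_nonneg x]

lemma cont_P (h : ℝ) (hh : 0 < h) : Continuous (dPdx h) := by
  unfold dPdx
  apply Continuous.div (by continuity) (by continuity)
  intro x
  have : (0:ℝ) < x^2 + h^2 := by positivity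
  positivity

lemma cont_Q (h : ℝ) (hh : 0 < h) : Continuous (dQdx h) := by
  unfold dQdx
  apply Continuous.div (by continuity) (by continuity)
  intro x
  have : (0:ℝ) < x^2 + h^2 := by positivity
  positivity

set_option maxHeartbeats 1000000 in
lemma no_target (a b c d h : ℝ) (hab : a < b) (hcd : c < d) (hh : 0 < h) (w : ℂ) (hw : ‖w‖ = 1)
    (φ : ℝ → ℝ) (hφ : MemLp φ 2 (volume.restrict (Set.Ioo c d)))
    (hae : ∀ᵐ t ∂(volume.restrict (Set.Ioo a b)),
      ((conv (dPdx h) ((Set.Ioo c d).indicator φ) t : ℂ)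
        + I * (conv (dQdx h) ((Set.Ioo c d).indicator φ) t : ℂ)) = w) : False := by
  set ψ : ℝ → ℝ := (Set.Ioo c d).indicator φ with hψdef
  have hψm : AEStronglyMeasurable ψ volume := by
    rw [hψdef, aestronglyMeasurable_indicator_iff measurableSet_Ioo]
    exact hφ.aestronglyMeasurable
  have hψmc : AEStronglyMeasurable (fun s => (ψ s : ℂ)) volume :=
    Complex.continuous_ofReal.comp_aestronglyMeasurable hψm
  haveI hfin : IsFiniteMeasure (volume.restrict (Set.Ioo c d)) := by
    constructor
    rw [Measure.restrict_apply_univ, Real.volume_Ioo]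
    exact ENNReal.ofReal_lt_top
  have hψi : Integrable ψ volume := by
    have h1 : MemLp φ 1 (volume.restrict (Set.Ioo c d)) :=
      hφ.mono_exponent (by norm_num)
    exact (integrable_indicator_iff measurableSet_Ioo).mpr (memLp_one_iff_integrable.mp h1)
  set c0 : ℂ := -(I / Real.pi) with hc0
  set W : ℂ → ℝ → ℂ := fun z s => z - (s:ℂ) + I * h with hWdef
  set F : ℂ → ℝ → ℂ := fun z s => (c0 * (ψ s : ℂ)) * ((W z s) ^ 2)⁻¹ with hFdef
  set F' : ℂ → ℝ → ℂ := fun z s =>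
      (c0 * (ψ s : ℂ)) * (-((2:ℕ) * (W z s) ^ 1 * 1) / ((W z s) ^ 2) ^ 2) with hF'def
  set g : ℂ → ℂ := fun z => ∫ s : ℝ, F z s with hgdef
  set U : Set ℂ := {z : ℂ | -h < z.im} with hUdef
  have hUopen : IsOpen U := isOpen_lt continuous_const Complex.continuous_im
  have hWcont : ∀ z : ℂ, Continuous fun s : ℝ => W z s :=
    fun z => (continuous_const.sub Complex.continuous_ofReal).add continuous_const
  have hWim : ∀ (z : ℂ) (s : ℝ), (W z s).im = z.im + h := by
    intro z s; simp [hWdef]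
  have hUlow : ∀ z ∈ U, ∀ s : ℝ, z.im + h ≤ ‖W z s‖ := by
    intro z hz s
    have h1 : |(W z s).im| ≤ ‖W z s‖ := Complex.abs_im_le_norm _
    rw [hWim] at h1
    have hz' : -h < z.im := hz
    calc z.im + h ≤ |z.im + h| := le_abs_self _
      _ ≤ ‖W z s‖ := h1
  have hne : ∀ z ∈ U, ∀ s : ℝ, W z s ≠ 0 := by
    intro z hz s h0
    have hz' : -h < z.im := hz
    have := hUlow z hz s
    rw [h0] at this
    simp at this
    linarith
  have hnormF : ∀ z s, ‖F z s‖ = (‖c0‖ * |ψ s|) * (‖W z s‖ ^ 2)⁻¹ := by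
    intro z s
    simp [hFdef, norm_mul, norm_inv, norm_pow, Complex.norm_real, Real.norm_eq_abs]
  have hFm : ∀ z ∈ U, AEStronglyMeasurable (F z) volume := by
    intro z hz
    apply AEStronglyMeasurable.mul (hψmc.const_mul c0)
    refine Continuous.aestronglyMeasurable ?_
    exact (((hWcont z).pow 2).inv₀ fun s => pow_ne_zero 2 (hne z hz s))
  have key : ∀ z₀ ∈ U, HasDerivAt g (∫ s : ℝ, F' z₀ s) z₀ := by
    intro z₀ hz₀
    have hz₀' : -h < z₀.im := hz₀
    set ε : ℝ := (z₀.im + h) / 2 with hεdef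
    have hεval : ε = (z₀.im + h) / 2 := hεdef
    have hε : 0 < ε := by rw [hεval]; linarith
    have hball : ∀ z ∈ ball z₀ ε, ε ≤ z.im + h := by
      intro z hz
      have h1 : |z.im - z₀.im| ≤ ‖z - z₀‖ := by
        rw [← Complex.sub_im]; exact Complex.abs_im_le_norm _
      have h2 : ‖z - z₀‖ < ε := by
        rwa [mem_ball, dist_eq_norm] at hz
      have h3 := abs_lt.mp (lt_of_le_of_lt h1 h2)
      have h4 : z₀.im - ε ≤ z.im := by linarith [h3.1]
      rw [hεval] at h4 ⊢
      linarith
    have hballU : ∀ z ∈ ball z₀ ε, z ∈ U := by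
      intro z hz
      have := hball z hz
      show -h < z.im
      linarith
    have hballlow : ∀ z ∈ ball z₀ ε, ∀ s : ℝ, ε ≤ ‖W z s‖ := by
      intro z hz s
      exact le_trans (hball z hz) (hUlow z (hballU z hz) s)
    have main := hasDerivAt_integral_of_dominated_loc_of_deriv_le
      (μ := volume) (F := F) (F' := F') (x₀ := z₀)
      (bound := fun s => (‖c0‖ * |ψ s|) * (2 / ε ^ 3)) (ball_mem_nhds z₀ hε)
      ?_ ?_ ?_ ?_ ?_ ?_
    · exact main.2
    · filter_upwards [hUopen.mem_nhds hz₀] with z hz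
      exact hFm z hz
    · apply Integrable.mono' ((hψi.norm.const_mul ‖c0‖).mul_const ((ε ^ 2)⁻¹))
        (hFm z₀ hz₀)
      refine Eventually.of_forall fun s => ?_
      rw [hnormF]
      have h1 : ε ≤ ‖W z₀ s‖ := hballlow z₀ (mem_ball_self hε) s
      have h4 : (‖W z₀ s‖ ^ 2)⁻¹ ≤ (ε ^ 2)⁻¹ :=
        inv_anti₀ (by positivity) (pow_le_pow_left₀ hε.le h1 2)
      exact mul_le_mul_of_nonneg_left h4 (mul_nonneg (norm_nonneg _) (abs_nonneg _))
    · apply AEStronglyMeasurable.mul (hψmc.const_mul c0)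
      refine Continuous.aestronglyMeasurable ?_
      apply Continuous.div
      · exact ((continuous_const.mul ((hWcont z₀).pow 1)).mul continuous_const).neg
      · exact ((hWcont z₀).pow 2).pow 2
      · intro s
        exact pow_ne_zero 2 (pow_ne_zero 2 (hne z₀ hz₀ s))
    · refine Eventually.of_forall fun s => fun z hz => ?_
      have h1 : ε ≤ ‖W z s‖ := hballlow z hz s
      have h2 : (0:ℝ) < ‖W z s‖ := lt_of_lt_of_le hε h1
      have hcalc : ‖F' z s‖ = (‖c0‖ * |ψ s|) * (2 * ‖W z s‖ / ‖W z s‖ ^ 4) := by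
        rw [hF'def]
        simp only [norm_mul, norm_neg, norm_div, norm_pow, norm_one, mul_one, pow_one,
          Complex.norm_natCast, Complex.norm_real, Real.norm_eq_abs]
        ring
      rw [hcalc]
      have h3 : 2 * ‖W z s‖ / ‖W z s‖ ^ 4 = 2 / ‖W z s‖ ^ 3 := by
        rw [div_eq_div_iff (by positivity) (by positivity)]
        ring
      rw [h3]
      have h4 : 2 / ‖W z s‖ ^ 3 ≤ 2 / ε ^ 3 :=
        div_le_div_of_nonneg_left (by norm_num) (by positivity) (pow_le_pow_left₀ hε.le h1 3)
      exact mul_le_mul_of_nonneg_left h4 (mul_nonneg (norm_nonneg _) (abs_nonneg _))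
    · exact (hψi.norm.const_mul ‖c0‖).mul_const _
    · refine Eventually.of_forall fun s => fun z hz => ?_
      have hWne : W z s ≠ 0 := hne z (hballU z hz) s
      have h1 : HasDerivAt (fun z : ℂ => W z s) 1 z := by
        exact (((hasDerivAt_id z).sub_const ((s:ℂ))).add_const (I * (h:ℂ)))
      have base : HasDerivAt (fun z : ℂ => W z s ^ 2) ((2:ℕ) * (W z s) ^ 1 * 1) z := h1.pow 2
      have hinv := base.inv (pow_ne_zero 2 hWne)
      exact hinv.const_mul (c0 * (ψ s : ℂ))
  have hdiff : DifferentiableOn ℂ g U := fun z hz =>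
    ((key z hz).differentiableAt).differentiableWithinAt
  have han : AnalyticOnNhd ℂ g U := hdiff.analyticOnNhd hUopen
  have hiP : ∀ t : ℝ, Integrable (fun s => dPdx h (t - s) * ψ s) volume := by
    intro t
    apply hψi.bdd_mul (((cont_P h hh).comp (continuous_const.sub continuous_id)).aestronglyMeasurable)
    exact Eventually.of_forall fun s => (Real.norm_eq_abs _).trans_le (kernel_bdd_P h hh (t - s))
  have hiQ : ∀ t : ℝ, Integrable (fun s => dQdx h (t - s) * ψ s) volume := by
    intro t
    apply hψi.bdd_mul (((cont_Q h hh).comp (continuous_const.sub continuous_id)).aestronglyMeasurable)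
    exact Eventually.of_forall fun s => (Real.norm_eq_abs _).trans_le (kernel_bdd_Q h hh (t - s))
  have hrel : ∀ t : ℝ, ((conv (dPdx h) ψ t : ℂ) + I * (conv (dQdx h) ψ t : ℂ)) = g ↑t := by
    intro t
    have hiPc : Integrable (fun s => ((dPdx h (t - s) * ψ s : ℝ) : ℂ)) volume := (hiP t).ofReal
    have hiQc : Integrable (fun s => Complex.I * ((dQdx h (t - s) * ψ s : ℝ) : ℂ)) volume :=
      ((hiQ t).ofReal).const_mul I
    rw [conv, conv, ← integral_complex_ofReal', ← integral_complex_ofReal',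
      ← integral_const_mul, ← integral_add hiPc hiQc]
    apply integral_congr_ae
    refine Eventually.of_forall fun s => ?_
    show ((dPdx h (t - s) * ψ s : ℝ) : ℂ) + I * ((dQdx h (t - s) * ψ s : ℝ) : ℂ) = F ↑t s
    have hWc : W ↑t s = ((t - s : ℝ) : ℂ) + I * h := by
      rw [hWdef]
      push_cast
      ring
    rw [hFdef]
    simp only [hWc]
    push_cast
    calc ((dPdx h (t - s) : ℂ)) * (ψ s : ℂ) + I * ((dQdx h (t - s) : ℂ) * (ψ s : ℂ))
        = ((dPdx h (t - s) : ℂ) + I * (dQdx h (t - s) : ℂ)) * (ψ s : ℂ) := by ring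
      _ = (-(I / Real.pi) * ((((t - s : ℝ) : ℂ) + I * h) ^ 2)⁻¹) * (ψ s : ℂ) := by
          rw [kernel_eq h hh (t - s)]
      _ = c0 * (ψ s : ℂ) * (((t : ℂ) - s + I * h) ^ 2)⁻¹ := by
          rw [hc0]; push_cast; ring
  have haU : (a : ℂ) ∈ U := by
    show -h < (a : ℂ).im
    simp
    linarith
  have hfreq : ∃ᶠ z in 𝓝[≠] (a : ℂ), g z = w := by
    rw [Filter.frequently_iff]
    intro V hV
    rw [Metric.mem_nhdsWithin_iff] at hV
    obtain ⟨ε, hε, hsub⟩ := hV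
    set m := min b (a + ε) with hm
    have ham : a < m := lt_min hab (by linarith)
    have hsubset : Set.Ioo a m ⊆ Set.Ioo a b := Set.Ioo_subset_Ioo le_rfl (min_le_left _ _)
    have hae2 : ∀ᵐ (t : ℝ) ∂(volume.restrict (Set.Ioo a m)), g (t : ℂ) = w := by
      refine ae_restrict_of_ae_restrict_of_subset hsubset ?_
      exact hae.mono fun t ht => by rw [← hrel t]; exact ht
    have hmem : ∀ᵐ t ∂(volume.restrict (Set.Ioo a m)), t ∈ Set.Ioo a m :=
      ae_restrict_mem measurableSet_Ioo
    haveI : (ae (volume.restrict (Set.Ioo a m))).NeBot := by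
      rw [ae_neBot]
      intro h0
      rw [Measure.restrict_eq_zero, Real.volume_Ioo] at h0
      have := ENNReal.ofReal_eq_zero.mp h0
      linarith
    obtain ⟨t, hgt, htm⟩ := (hae2.and hmem).exists
    refine ⟨(t : ℂ), hsub ⟨?_, ?_⟩, hgt⟩
    · rw [mem_ball, Complex.isometry_ofReal.dist_eq, Real.dist_eq]
      have h5 : t < a + ε := lt_of_lt_of_le htm.2 (min_le_right _ _)
      rw [abs_of_pos (by linarith [htm.1] : (0:ℝ) < t - a)]
      linarith
    · simp only [Set.mem_compl_iff, Set.mem_singleton_iff]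
      intro h0
      have : t = a := by exact_mod_cast h0
      linarith [htm.1]
  have hpre : IsPreconnected U := (convex_halfSpace_im_gt (-h)).isPreconnected
  have heq : Set.EqOn g (fun _ => w) U :=
    han.eqOn_of_preconnected_of_frequently_eq analyticOnNhd_const hpre haU hfreq
  -- decay at infinity
  set Iψ : ℝ := ∫ s, |ψ s| with hIψ
  have hIψ0 : 0 ≤ Iψ := integral_nonneg fun s => abs_nonneg _
  set R : ℝ := 1 + ‖c0‖ * Iψ with hR
  have hR1 : 1 ≤ R := by nlinarith [norm_nonneg c0]
  set t : ℝ := d + R with ht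
  have htU : ((t:ℝ) : ℂ) ∈ U := by
    show -h < ((t:ℝ) : ℂ).im
    simp
    linarith
  have hgt : g ↑t = w := heq htU
  have hbound : ‖g ↑t‖ ≤ (‖c0‖ * Iψ) * (R ^ 2)⁻¹ := by
    have hInt : Integrable (fun s => (‖c0‖ * |ψ s|) * ((R^2)⁻¹)) volume :=
      (hψi.norm.const_mul ‖c0‖).mul_const _
    have hle : ∀ s, ‖F ↑t s‖ ≤ (‖c0‖ * |ψ s|) * ((R^2)⁻¹) := by
      intro s
      rw [hnormF]
      by_cases hs : s ∈ Set.Ioo c d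
      · have h1 : R ≤ ‖W ↑t s‖ := by
          have h2 : |(W ↑t s).re| ≤ ‖W ↑t s‖ := Complex.abs_re_le_norm _
          have h3 : (W ↑t s).re = t - s := by simp [hWdef]
          calc R ≤ t - s := by rw [ht] at *; linarith [hs.2]
            _ ≤ |t - s| := le_abs_self _
            _ ≤ _ := by rw [← h3]; exact h2
        have hR0 : (0:ℝ) < R := by linarith
        have h4 : (‖W ↑t s‖ ^ 2)⁻¹ ≤ (R ^ 2)⁻¹ :=
          inv_anti₀ (by positivity) (pow_le_pow_left₀ hR0.le h1 2)
        exact mul_le_mul_of_nonneg_left h4 (mul_nonneg (norm_nonneg _) (abs_nonneg _))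
      · have hz : ψ s = 0 := Set.indicator_of_notMem hs φ
        rw [hz]
        simp
    calc ‖g ↑t‖ ≤ ∫ s, (‖c0‖ * |ψ s|) * ((R^2)⁻¹) :=
        norm_integral_le_of_norm_le hInt (Eventually.of_forall hle)
      _ = (‖c0‖ * Iψ) * ((R^2)⁻¹) := by
        rw [integral_mul_const, integral_const_mul]
  rw [hgt, hw] at hbound
  have hcI : ‖c0‖ * Iψ = R - 1 := by rw [hR]; ring
  rw [hcI] at hbound
  have hR2 : (0:ℝ) < R ^ 2 := by positivity
  rw [← div_eq_mul_inv, le_div_iff₀ hR2] at hbound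
  nlinarith

/-- Neither moment-estimation target `e₁ = (χ_S, 0)` nor `e₂ = (0, χ_S)` lies in the range of
the adjoint field operator `b₂*`: no `φ ∈ L²(K)` has `((∂ₓP_h) ⋆ φ̃, (∂ₓQ_h) ⋆ φ̃) = (1,0)`
a.e. on `S`, and none has `((∂ₓP_h) ⋆ φ̃, (∂ₓQ_h) ⋆ φ̃) = (0,1)` a.e. on `S`.
Here `S = (a,b)`, `K = (c,d)`. -/
theorem stmt19 (a b c d h : ℝ) (hab : a < b) (hcd : c < d) (hh : 0 < h) :
    (¬ ∃ φ : ℝ → ℝ, MemLp φ 2 (volume.restrict (Set.Ioo c d)) ∧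
      (∀ᵐ t ∂(volume.restrict (Set.Ioo a b)),
        conv (dPdx h) ((Set.Ioo c d).indicator φ) t = 1) ∧
      (∀ᵐ t ∂(volume.restrict (Set.Ioo a b)),
        conv (dQdx h) ((Set.Ioo c d).indicator φ) t = 0)) ∧
    (¬ ∃ φ : ℝ → ℝ, MemLp φ 2 (volume.restrict (Set.Ioo c d)) ∧
      (∀ᵐ t ∂(volume.restrict (Set.Ioo a b)),
        conv (dPdx h) ((Set.Ioo c d).indicator φ) t = 0) ∧
      (∀ᵐ t ∂(volume.restrict (Set.Ioo a b)),
        conv (dQdx h) ((Set.Ioo c d).indicator φ) t = 1)) := by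
  constructor
  · rintro ⟨φ, hφ, h1, h2⟩
    refine no_target a b c d h hab hcd hh 1 (by simp) φ hφ ?_
    filter_upwards [h1, h2] with t e1 e2
    rw [e1, e2]
    simp
  · rintro ⟨φ, hφ, h1, h2⟩
    refine no_target a b c d h hab hcd hh Complex.I (by simp) φ hφ ?_
    filter_upwards [h1, h2] with t e1 e2
    rw [e1, e2]
    simp
end
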